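/- arXiv:1911.00395 — 7 statements merged into one kernel-verified Lean document; each statement's English description precedes it below -/
import Mathlib

section
/- The function v is well defined and finite on [0,∞), satisfies 1 + v(t) > 0 for all t ≥ 0, and the effective potential V(t) = t − log(1+v(t)) is real-analytic on (0,∞). -/
set_option maxHeartbeats 1600000
set_option linter.unusedSectionVars false

open MeasureTheory Filter Set Topology

/-- Modified Bessel function of the first kind `I₁`, defined by its power series. -/
noncomputable def besselI1 (z : ℝ) : ℝ :=
  ∑' k : ℕ, (1 / ((Nat.factorial k : ℝ) * (Nat.factorial (k + 1) : ℝ))) * (z / 2) ^ (2 * k + 1)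

/-- `v(t) = ∫₀^∞ p(s) e^{-s} √(t/s) I₁(2√(st)) ds`. -/
noncomputable def vFun (p : ℝ → ℝ) (t : ℝ) : ℝ :=
  ∫ s in Set.Ioi (0 : ℝ), p s * Real.exp (-s) * Real.sqrt (t / s) * besselI1 (2 * Real.sqrt (s * t))

lemma analytic_tsum_pow {a : ℕ → ℝ} {C : ℝ} (hC : ∀ n, |a n| ≤ C / n.factorial) :
    AnalyticOnNhd ℝ (fun x : ℝ => ∑' n, a n * x ^ n) Set.univ := by
  have hrad : (FormalMultilinearSeries.ofScalars ℝ a).radius = ⊤ := by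
    apply FormalMultilinearSeries.radius_eq_top_of_summable_norm
    intro r
    have h1 : Summable (fun n : ℕ => C * ((r : ℝ) ^ n / n.factorial)) :=
      (Real.summable_pow_div_factorial (r : ℝ)).mul_left C
    have h2 : ∀ n : ℕ, ‖FormalMultilinearSeries.ofScalars ℝ a n‖ * (r : ℝ) ^ n ≤
        C * ((r : ℝ) ^ n / n.factorial) := by
      intro n
      rw [FormalMultilinearSeries.ofScalars_norm]
      calc ‖a n‖ * (r : ℝ) ^ n ≤ (C / n.factorial) * (r : ℝ) ^ n :=
            mul_le_mul_of_nonneg_right (hC n) (by positivity)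
        _ = C * ((r : ℝ) ^ n / n.factorial) := by ring
    exact Summable.of_nonneg_of_le (fun n => mul_nonneg (norm_nonneg _) (by positivity)) h2 h1
  have hsum : (FormalMultilinearSeries.ofScalars ℝ a).sum = fun x : ℝ => ∑' n, a n * x ^ n := by
    funext x
    exact tsum_congr fun n => by
      rw [FormalMultilinearSeries.ofScalars_apply_eq, smul_eq_mul]
  intro x _
  have hball := (FormalMultilinearSeries.ofScalars ℝ a).hasFPowerSeriesOnBall
    (by rw [hrad]; exact ENNReal.zero_lt_top)
  rw [hrad, hsum] at hball
  exact hball.analyticAt_of_mem (by simp [edist_lt_top])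

lemma analyticAt_rlog {x : ℝ} (hx : 0 < x) : AnalyticAt ℝ Real.log x := by
  have h1 : AnalyticAt ℂ Complex.log (x : ℂ) :=
    analyticAt_clog (Complex.ofReal_mem_slitPlane.mpr hx)
  have h3 : AnalyticAt ℝ (fun t : ℝ => Complex.log t) x :=
    h1.restrictScalars.comp (Complex.ofRealCLM.analyticAt x)
  have h4 : AnalyticAt ℝ (fun t : ℝ => (Complex.log t).re) x :=
    (Complex.reCLM.analyticAt _).comp h3
  exact h4.congr (by filter_upwards with t using Complex.log_ofReal_re t)

lemma besselI1_nonneg {z : ℝ} (hz : 0 ≤ z) : 0 ≤ besselI1 z :=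
  tsum_nonneg fun k => by positivity

lemma besselI1_eq (z : ℝ) :
    besselI1 z = (∑' k : ℕ, (1 / ((Nat.factorial k : ℝ) * (Nat.factorial (k + 1) : ℝ))) *
      ((z / 2) ^ 2) ^ k) * (z / 2) := by
  rw [besselI1, ← tsum_mul_right]
  exact tsum_congr fun k => by rw [pow_succ, pow_mul, mul_assoc]

lemma besselI1_continuous : Continuous besselI1 := by
  have h : ∀ n : ℕ, |(1 / ((Nat.factorial n : ℝ) * (Nat.factorial (n + 1) : ℝ)))| ≤
      1 / n.factorial := by
    intro n
    rw [abs_of_nonneg (by positivity)]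
    apply div_le_div_of_nonneg_left one_pos.le (by positivity)
    calc (n.factorial : ℝ) = n.factorial * 1 := (mul_one _).symm
      _ ≤ n.factorial * (n + 1).factorial := by
          apply mul_le_mul_of_nonneg_left _ (by positivity)
          exact_mod_cast (n + 1).factorial_pos
  have hg := analytic_tsum_pow h
  have hgc : Continuous (fun x : ℝ => ∑' n : ℕ,
      (1 / ((Nat.factorial n : ℝ) * (Nat.factorial (n + 1) : ℝ))) * x ^ n) :=
    continuous_iff_continuousAt.mpr fun x => (hg x (mem_univ x)).continuousAt
  have : besselI1 = fun z => (∑' n : ℕ,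
      (1 / ((Nat.factorial n : ℝ) * (Nat.factorial (n + 1) : ℝ))) * ((z / 2) ^ 2) ^ n) * (z / 2) :=
    funext besselI1_eq
  rw [this]
  exact (hgc.comp (by continuity)).mul (by continuity)

lemma exp_neg_mul_pow_le {s : ℝ} (hs : 0 ≤ s) (k : ℕ) :
    Real.exp (-s) * s ^ k ≤ k.factorial := by
  have h1 : s ^ k / k.factorial ≤ Real.exp s := by
    refine le_trans ?_ (Real.sum_le_exp_of_nonneg hs (k + 1))
    exact Finset.single_le_sum (f := fun i => s ^ i / i.factorial)
      (fun i _ => by positivity) (Finset.self_mem_range_succ k)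
  have h2 : s ^ k ≤ Real.exp s * k.factorial :=
    (div_le_iff₀ (by positivity)).mp h1
  calc Real.exp (-s) * s ^ k = s ^ k / Real.exp s := by
        rw [Real.exp_neg]; ring
    _ ≤ k.factorial := by
        rw [div_le_iff₀ (Real.exp_pos s)]
        calc s ^ k ≤ Real.exp s * k.factorial := h2
          _ = k.factorial * Real.exp s := mul_comm _ _

lemma kernel_eq {s t : ℝ} (hs : 0 < s) (ht : 0 ≤ t) :
    Real.sqrt (t / s) * besselI1 (2 * Real.sqrt (s * t)) =
      ∑' k : ℕ, (1 / ((Nat.factorial k : ℝ) * (Nat.factorial (k + 1) : ℝ))) *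
        (s ^ k * t ^ (k + 1)) := by
  have hst : (0 : ℝ) ≤ s * t := mul_nonneg hs.le ht
  have h2 : (2 * Real.sqrt (s * t)) / 2 = Real.sqrt (s * t) := by ring
  rw [besselI1, ← tsum_mul_left]
  refine tsum_congr fun k => ?_
  rw [h2]
  have h1 : Real.sqrt (s * t) ^ (2 * k + 1) = (s * t) ^ k * Real.sqrt (s * t) := by
    rw [pow_succ, pow_mul, Real.sq_sqrt hst]
  rw [h1]
  have h3 : Real.sqrt (t / s) * Real.sqrt (s * t) = t := by
    rw [← Real.sqrt_mul (by positivity)]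
    have h4 : t / s * (s * t) = t * t := by field_simp
    rw [h4, Real.sqrt_mul_self ht]
  calc Real.sqrt (t / s) * (1 / ((Nat.factorial k : ℝ) * (Nat.factorial (k + 1) : ℝ)) *
        ((s * t) ^ k * Real.sqrt (s * t)))
      = 1 / ((Nat.factorial k : ℝ) * (Nat.factorial (k + 1) : ℝ)) *
        ((s * t) ^ k * (Real.sqrt (t / s) * Real.sqrt (s * t))) := by ring
    _ = 1 / ((Nat.factorial k : ℝ) * (Nat.factorial (k + 1) : ℝ)) * (s ^ k * t ^ (k + 1)) := by
        rw [h3, mul_pow, pow_succ]; ring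

/-- Auxiliary summand functions. -/
noncomputable def Fk (p : ℝ → ℝ) (t : ℝ) (k : ℕ) (s : ℝ) : ℝ :=
  (p s * Real.exp (-s) * s ^ k) *
    (t ^ (k + 1) / ((Nat.factorial k : ℝ) * (Nat.factorial (k + 1) : ℝ)))

lemma Fk_nonneg {p : ℝ → ℝ} {t s : ℝ} (hp : 0 ≤ p s) (hs : 0 ≤ s) (ht : 0 ≤ t) (k : ℕ) :
    0 ≤ Fk p t k s := by
  unfold Fk
  have : (0:ℝ) ≤ p s * Real.exp (-s) * s ^ k :=
    mul_nonneg (mul_nonneg hp (Real.exp_pos _).le) (pow_nonneg hs k)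
  exact mul_nonneg this (by positivity)

lemma Fk_le {p : ℝ → ℝ} {t s : ℝ} (hp : 0 ≤ p s) (hs : 0 ≤ s) (ht : 0 ≤ t) (k : ℕ) :
    Fk p t k s ≤ p s * (t ^ (k + 1) / (Nat.factorial (k + 1) : ℝ)) := by
  unfold Fk
  have hb := exp_neg_mul_pow_le hs k
  have hkne : (Nat.factorial k : ℝ) ≠ 0 := by positivity
  have hk1ne : (Nat.factorial (k + 1) : ℝ) ≠ 0 := by positivity
  calc (p s * Real.exp (-s) * s ^ k) *
        (t ^ (k + 1) / ((Nat.factorial k : ℝ) * (Nat.factorial (k + 1) : ℝ)))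
      = (Real.exp (-s) * s ^ k) *
        (p s * (t ^ (k + 1) / ((Nat.factorial k : ℝ) * (Nat.factorial (k + 1) : ℝ)))) := by ring
    _ ≤ (Nat.factorial k : ℝ) *
        (p s * (t ^ (k + 1) / ((Nat.factorial k : ℝ) * (Nat.factorial (k + 1) : ℝ)))) := by
        apply mul_le_mul_of_nonneg_right hb
        exact mul_nonneg hp (by positivity)
    _ = p s * (t ^ (k + 1) / (Nat.factorial (k + 1) : ℝ)) := by
        field_simp

section main
variable {p : ℝ → ℝ} (hmeas : Measurable p) (hpos : ∀ s, 0 ≤ s → 0 ≤ p s)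
  (hint : IntegrableOn p (Set.Ioi 0))
set_option linter.unusedSectionVars false in
include hmeas in
lemma measurable_aux (k : ℕ) : Measurable (fun s => p s * Real.exp (-s) * s ^ k) :=
  (hmeas.mul (Real.measurable_exp.comp measurable_neg)).mul (measurable_id.pow_const k)

include hmeas hint in
lemma aux_integrableOn (k : ℕ) :
    IntegrableOn (fun s => p s * Real.exp (-s) * s ^ k) (Set.Ioi 0) := by
  refine Integrable.mono (hint.mul_const (Nat.factorial k : ℝ))
    ((measurable_aux hmeas k).aestronglyMeasurable.restrict) ?_
  rw [ae_restrict_iff' measurableSet_Ioi]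
  filter_upwards with s hs
  have hs0 : (0:ℝ) < s := hs
  rw [Real.norm_eq_abs, Real.norm_eq_abs, abs_mul, abs_mul, abs_mul]
  have h1 : |Real.exp (-s)| * |s ^ k| ≤ |(Nat.factorial k : ℝ)| := by
    rw [abs_of_nonneg (Real.exp_pos _).le, abs_of_nonneg (pow_nonneg hs0.le k),
      abs_of_nonneg (by positivity)]
    exact exp_neg_mul_pow_le hs0.le k
  calc |p s| * |Real.exp (-s)| * |s ^ k| = |p s| * (|Real.exp (-s)| * |s ^ k|) := mul_assoc _ _ _
    _ ≤ |p s| * |(Nat.factorial k : ℝ)| := mul_le_mul_of_nonneg_left h1 (abs_nonneg _)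

include hmeas hint in
lemma Fk_integrableOn (t : ℝ) (k : ℕ) : IntegrableOn (Fk p t k) (Set.Ioi 0) := by
  unfold Fk
  exact (aux_integrableOn hmeas hint k).mul_const _

include hmeas hpos hint in
lemma Fk_integral_norm_le (t : ℝ) (ht : 0 ≤ t) (k : ℕ) :
    ∫ s in Set.Ioi 0, ‖Fk p t k s‖ ≤
      (∫ s in Set.Ioi 0, p s) * (t ^ (k + 1) / (Nat.factorial (k + 1) : ℝ)) := by
  rw [← MeasureTheory.integral_mul_const]
  refine setIntegral_mono_on ((Fk_integrableOn hmeas hint t k).norm)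
    (hint.mul_const _) measurableSet_Ioi ?_
  intro s hs
  have hs0 : (0:ℝ) < s := hs
  have hp := hpos s hs0.le
  rw [Real.norm_eq_abs, abs_of_nonneg (Fk_nonneg hp hs0.le ht k)]
  exact Fk_le hp hs0.le ht k

lemma summable_bound (t : ℝ) (C : ℝ) :
    Summable (fun k : ℕ => C * (t ^ (k + 1) / (Nat.factorial (k + 1) : ℝ))) := by
  have h := (Real.summable_pow_div_factorial t).comp_injective Nat.succ_injective
  exact h.mul_left C

lemma integrand_eq_tsum (t : ℝ) (ht : 0 ≤ t) {s : ℝ} (hs : 0 < s) :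
    p s * Real.exp (-s) * Real.sqrt (t / s) * besselI1 (2 * Real.sqrt (s * t)) =
      ∑' k : ℕ, Fk p t k s := by
  rw [mul_assoc, kernel_eq hs ht, ← tsum_mul_left]
  refine tsum_congr fun k => ?_
  unfold Fk; ring

include hmeas hpos hint in
lemma vFun_sum_eq (t : ℝ) (ht : 0 ≤ t) :
    (∫ s in Set.Ioi 0, p s * Real.exp (-s) * Real.sqrt (t / s) *
      besselI1 (2 * Real.sqrt (s * t))) = ∑' k : ℕ, ∫ s in Set.Ioi 0, Fk p t k s := by
  have hP : Summable fun k : ℕ => ∫ s in Set.Ioi 0, ‖Fk p t k s‖ := by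
    refine Summable.of_nonneg_of_le (fun k => integral_nonneg fun s => norm_nonneg _)
      (fun k => Fk_integral_norm_le hmeas hpos hint t ht k)
      (summable_bound t (∫ s in Set.Ioi 0, p s))
  rw [setIntegral_congr_fun measurableSet_Ioi
    (fun s hs => integrand_eq_tsum t ht (mem_Ioi.mp hs))]
  exact (integral_tsum_of_summable_integral_norm
    (fun k => Fk_integrableOn hmeas hint t k) hP).symm

lemma integral_Fk (t : ℝ) (k : ℕ) :
    ∫ s in Set.Ioi 0, Fk p t k s =
      (∫ s in Set.Ioi 0, p s * Real.exp (-s) * s ^ k) *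
        (t ^ (k + 1) / ((Nat.factorial k : ℝ) * (Nat.factorial (k + 1) : ℝ))) := by
  unfold Fk
  exact MeasureTheory.integral_mul_const _ _

end main

/-- Power series coefficients of `v`. -/
noncomputable def coeffA (p : ℝ → ℝ) : ℕ → ℝ
  | 0 => 0
  | (k + 1) => (∫ s in Set.Ioi (0:ℝ), p s * Real.exp (-s) * s ^ k) *
      (1 / ((Nat.factorial k : ℝ) * (Nat.factorial (k + 1) : ℝ)))

section main2
variable {p : ℝ → ℝ} (hmeas : Measurable p) (hpos : ∀ s, 0 ≤ s → 0 ≤ p s)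
  (hint : IntegrableOn p (Set.Ioi 0))

include hpos in
lemma intp_nonneg : 0 ≤ ∫ s in Set.Ioi (0:ℝ), p s :=
  setIntegral_nonneg measurableSet_Ioi fun s hs => hpos s (le_of_lt hs)

include hmeas hpos hint in
lemma aux_integral_nonneg (k : ℕ) : 0 ≤ ∫ s in Set.Ioi (0:ℝ), p s * Real.exp (-s) * s ^ k :=
  setIntegral_nonneg measurableSet_Ioi fun s hs =>
    mul_nonneg (mul_nonneg (hpos s (le_of_lt hs)) (Real.exp_pos _).le)
      (pow_nonneg (le_of_lt hs) k)

include hmeas hpos hint in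
lemma aux_integral_le (k : ℕ) :
    (∫ s in Set.Ioi (0:ℝ), p s * Real.exp (-s) * s ^ k) ≤
      (∫ s in Set.Ioi (0:ℝ), p s) * (Nat.factorial k : ℝ) := by
  rw [← MeasureTheory.integral_mul_const]
  refine setIntegral_mono_on (aux_integrableOn hmeas hint k) (hint.mul_const _)
    measurableSet_Ioi fun s hs => ?_
  have hs0 : (0:ℝ) < s := hs
  rw [mul_assoc]
  exact mul_le_mul_of_nonneg_left (exp_neg_mul_pow_le hs0.le k) (hpos s hs0.le)

include hmeas hpos hint in
lemma coeffA_nonneg (n : ℕ) : 0 ≤ coeffA p n := by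
  cases n with
  | zero => simp [coeffA]
  | succ k =>
    simp only [coeffA]
    exact mul_nonneg (aux_integral_nonneg hmeas hpos hint k) (by positivity)

include hmeas hpos hint in
lemma coeffA_le (n : ℕ) :
    coeffA p n ≤ (∫ s in Set.Ioi (0:ℝ), p s) / (Nat.factorial n : ℝ) := by
  cases n with
  | zero => simpa [coeffA] using intp_nonneg hpos
  | succ k =>
    simp only [coeffA]
    have hk : (0:ℝ) < (Nat.factorial k : ℝ) := by positivity
    have hk1 : (0:ℝ) < (Nat.factorial (k+1) : ℝ) := by positivity
    calc (∫ s in Set.Ioi (0:ℝ), p s * Real.exp (-s) * s ^ k) *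
          (1 / ((Nat.factorial k : ℝ) * (Nat.factorial (k + 1) : ℝ)))
        ≤ ((∫ s in Set.Ioi (0:ℝ), p s) * (Nat.factorial k : ℝ)) *
          (1 / ((Nat.factorial k : ℝ) * (Nat.factorial (k + 1) : ℝ))) :=
          mul_le_mul_of_nonneg_right (aux_integral_le hmeas hpos hint k) (by positivity)
      _ = (∫ s in Set.Ioi (0:ℝ), p s) / (Nat.factorial (k+1) : ℝ) := by
          field_simp

include hmeas hpos hint in
lemma coeffA_abs_le (n : ℕ) :
    |coeffA p n| ≤ (∫ s in Set.Ioi (0:ℝ), p s) / (Nat.factorial n : ℝ) := by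
  rw [abs_of_nonneg (coeffA_nonneg hmeas hpos hint n)]
  exact coeffA_le hmeas hpos hint n

include hmeas hpos hint in
lemma summable_coeffA_mul (t : ℝ) (ht : 0 ≤ t) :
    Summable (fun n : ℕ => coeffA p n * t ^ n) := by
  refine Summable.of_nonneg_of_le
    (fun n => mul_nonneg (coeffA_nonneg hmeas hpos hint n) (pow_nonneg ht n))
    (fun n => ?_)
    (((Real.summable_pow_div_factorial t).mul_left (∫ s in Set.Ioi (0:ℝ), p s)))
  calc coeffA p n * t ^ n
      ≤ ((∫ s in Set.Ioi (0:ℝ), p s) / (Nat.factorial n : ℝ)) * t ^ n :=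
        mul_le_mul_of_nonneg_right (coeffA_le hmeas hpos hint n) (pow_nonneg ht n)
    _ = (∫ s in Set.Ioi (0:ℝ), p s) * (t ^ n / (Nat.factorial n : ℝ)) := by ring

include hmeas hpos hint in
lemma vFun_eq_g (t : ℝ) (ht : 0 ≤ t) :
    vFun p t = ∑' n : ℕ, coeffA p n * t ^ n := by
  rw [Summable.tsum_eq_zero_add (summable_coeffA_mul hmeas hpos hint t ht)]
  have h0 : coeffA p 0 * t ^ 0 = 0 := by simp [coeffA]
  rw [h0, zero_add, vFun, vFun_sum_eq hmeas hpos hint t ht]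
  refine tsum_congr fun k => ?_
  rw [integral_Fk]
  simp only [coeffA]
  ring

end main2

theorem stmt1 (p : ℝ → ℝ) (hmeas : Measurable p) (hpos : ∀ s, 0 ≤ s → 0 ≤ p s)
    (hint : IntegrableOn p (Set.Ioi 0)) :
    (∀ t : ℝ, 0 ≤ t →
      IntegrableOn (fun s => p s * Real.exp (-s) * Real.sqrt (t / s) *
        besselI1 (2 * Real.sqrt (s * t))) (Set.Ioi 0)) ∧
    (∀ t : ℝ, 0 ≤ t → 0 < 1 + vFun p t) ∧
    AnalyticOnNhd ℝ (fun t => t - Real.log (1 + vFun p t)) (Set.Ioi 0) := by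
  -- nonnegativity of the integrand
  have hnn : ∀ t : ℝ, 0 ≤ t → ∀ s ∈ Set.Ioi (0:ℝ),
      0 ≤ p s * Real.exp (-s) * Real.sqrt (t / s) * besselI1 (2 * Real.sqrt (s * t)) := by
    intro t ht s hs
    have hs0 : (0:ℝ) < s := hs
    exact mul_nonneg (mul_nonneg (mul_nonneg (hpos s hs0.le) (Real.exp_pos _).le)
      (Real.sqrt_nonneg _)) (besselI1_nonneg (by positivity))
  have hIntegrable : ∀ t : ℝ, 0 ≤ t →
      IntegrableOn (fun s => p s * Real.exp (-s) * Real.sqrt (t / s) *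
        besselI1 (2 * Real.sqrt (s * t))) (Set.Ioi 0) := by
    intro t ht
    set B : ℝ := ∑' k : ℕ, (t ^ (k + 1) / (Nat.factorial (k + 1) : ℝ)) with hB
    have hBsum : Summable (fun k : ℕ => t ^ (k + 1) / (Nat.factorial (k + 1) : ℝ)) :=
      (summable_bound t 1).congr fun k => one_mul _
    have hmeas' : Measurable (fun s => p s * Real.exp (-s) * Real.sqrt (t / s) *
        besselI1 (2 * Real.sqrt (s * t))) := by
      refine (((hmeas.mul (Real.measurable_exp.comp measurable_neg)).mul
        (Real.continuous_sqrt.measurable.comp (measurable_const.div measurable_id))).mul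
        (besselI1_continuous.measurable.comp ?_))
      exact measurable_const.mul (Real.continuous_sqrt.measurable.comp
        (measurable_id.mul_const t))
    refine Integrable.mono (hint.mul_const B) hmeas'.aestronglyMeasurable.restrict ?_
    rw [ae_restrict_iff' measurableSet_Ioi]
    filter_upwards with s hs
    have hs0 : (0:ℝ) < s := hs
    have heq := integrand_eq_tsum (p := p) t ht hs0
    have h1 : p s * Real.exp (-s) * Real.sqrt (t / s) *
        besselI1 (2 * Real.sqrt (s * t)) ≤ p s * B := by
      rw [heq, hB, ← tsum_mul_left]
      refine Summable.tsum_le_tsum (fun k => Fk_le (hpos s hs0.le) hs0.le ht k) ?_ ?_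
      · refine Summable.of_nonneg_of_le
          (fun k => Fk_nonneg (hpos s hs0.le) hs0.le ht k)
          (fun k => Fk_le (hpos s hs0.le) hs0.le ht k) (summable_bound t (p s))
      · exact summable_bound t (p s)
    rw [Real.norm_eq_abs, Real.norm_eq_abs, abs_of_nonneg (hnn t ht s hs)]
    exact le_trans h1 (le_abs_self _)
  have hvnn : ∀ t : ℝ, 0 ≤ t → 0 ≤ vFun p t := by
    intro t ht
    exact setIntegral_nonneg measurableSet_Ioi (hnn t ht)
  have hvpos : ∀ t : ℝ, 0 ≤ t → 0 < 1 + vFun p t := by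
    intro t ht; linarith [hvnn t ht]
  refine ⟨hIntegrable, hvpos, ?_⟩
  -- analyticity
  have hg : AnalyticOnNhd ℝ (fun x : ℝ => ∑' n, coeffA p n * x ^ n) Set.univ :=
    analytic_tsum_pow (coeffA_abs_le hmeas hpos hint)
  intro x hx
  have hx0 : (0:ℝ) < x := hx
  have hga : AnalyticAt ℝ (fun x : ℝ => ∑' n, coeffA p n * x ^ n) x := hg x (mem_univ x)
  have h1 : AnalyticAt ℝ (fun t : ℝ => 1 + ∑' n, coeffA p n * t ^ n) x :=
    analyticAt_const.add hga
  have hgx : (∑' n, coeffA p n * x ^ n) = vFun p x := (vFun_eq_g hmeas hpos hint x hx0.le).symm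
  have hlog : AnalyticAt ℝ Real.log (1 + ∑' n, coeffA p n * x ^ n) := by
    apply analyticAt_rlog
    rw [hgx]
    exact hvpos x hx0.le
  have hcomp : AnalyticAt ℝ (fun t : ℝ => Real.log (1 + ∑' n, coeffA p n * t ^ n)) x :=
    AnalyticAt.comp (f := fun t : ℝ => 1 + ∑' n, coeffA p n * t ^ n) hlog h1
  have h2 : AnalyticAt ℝ (fun t : ℝ => t - Real.log (1 + ∑' n, coeffA p n * t ^ n)) x :=
    (analyticAt_id).sub hcomp
  refine h2.congr ?_
  filter_upwards [Ioi_mem_nhds hx0] with t ht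
  rw [vFun_eq_g hmeas hpos hint t (le_of_lt ht)]
end

section
/- If in addition there exist C, ε > 0 such that p(s) ≤ C e^{−εs} for all s ≥ 0, then there exist δ > 0 and C′ > 0 such that v(t) ≤ C′ e^{(1−δ)t} for all t ≥ 0, and consequently there is a constant C″ such that V(t) ≥ δt − C″ for all t ≥ 0. -/
open MeasureTheory Filter Set Topology

lemma fact_bound (k : ℕ) :
    (2 * k).factorial ≤ 4 ^ k * (k.factorial * (k + 1).factorial) := by
  have h1 : (2 * k).choose k * k.factorial * (2 * k - k).factorial = (2 * k).factorial :=
    Nat.choose_mul_factorial_mul_factorial (by omega)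
  have h2 : (2 * k).choose k ≤ 2 ^ (2 * k) := by
    calc (2 * k).choose k ≤ ∑ m ∈ Finset.range (2 * k + 1), (2 * k).choose m :=
          Finset.single_le_sum (fun i _ => Nat.zero_le _) (Finset.mem_range.mpr (by omega))
      _ = 2 ^ (2 * k) := Nat.sum_range_choose (2 * k)
  have h3 : 2 * k - k = k := by omega
  have hk : k.factorial ≤ (k + 1).factorial := Nat.factorial_le (by omega)
  have h4 : (2 : ℕ) ^ (2 * k) = 4 ^ k := by
    rw [pow_mul]; norm_num
  calc (2 * k).factorial = (2 * k).choose k * k.factorial * k.factorial := by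
        rw [← h1, h3]
    _ ≤ 2 ^ (2 * k) * k.factorial * (k + 1).factorial :=
        Nat.mul_le_mul (Nat.mul_le_mul h2 le_rfl) hk
    _ = 4 ^ k * (k.factorial * (k + 1).factorial) := by rw [h4, mul_assoc]

lemma besselI1_term_nonneg {z : ℝ} (hz : 0 ≤ z) (k : ℕ) :
    0 ≤ (1 / ((Nat.factorial k : ℝ) * (Nat.factorial (k + 1) : ℝ))) * (z / 2) ^ (2 * k + 1) := by
  have : (0 : ℝ) ≤ (z / 2) ^ (2 * k + 1) := pow_nonneg (by linarith) _
  have h1 : (0 : ℝ) ≤ 1 / ((Nat.factorial k : ℝ) * (Nat.factorial (k + 1) : ℝ)) := by positivity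
  exact mul_nonneg h1 this

lemma besselI1_term_le {z : ℝ} (hz : 0 ≤ z) (k : ℕ) :
    (1 / ((Nat.factorial k : ℝ) * (Nat.factorial (k + 1) : ℝ))) * (z / 2) ^ (2 * k + 1)
      ≤ (z / 2) * (z ^ (2 * k) / (Nat.factorial (2 * k) : ℝ)) := by
  have hfk : (0 : ℝ) < (Nat.factorial k : ℝ) := by exact_mod_cast k.factorial_pos
  have hfk1 : (0 : ℝ) < (Nat.factorial (k + 1) : ℝ) := by exact_mod_cast (k + 1).factorial_pos
  have hf2k : (0 : ℝ) < (Nat.factorial (2 * k) : ℝ) := by exact_mod_cast (2 * k).factorial_pos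
  have hb : (Nat.factorial (2 * k) : ℝ) ≤ 4 ^ k * ((Nat.factorial k : ℝ) * (Nat.factorial (k + 1) : ℝ)) := by
    exact_mod_cast fact_bound k
  have h4 : (2 : ℝ) ^ (2 * k) = 4 ^ k := by rw [pow_mul]; norm_num
  have h2pow : ((2 : ℝ)) ^ (2 * k + 1) = 4 ^ k * 2 := by
    rw [pow_succ, h4]
  have lhs_eq : (1 / ((Nat.factorial k : ℝ) * (Nat.factorial (k + 1) : ℝ))) * (z / 2) ^ (2 * k + 1)
      = z ^ (2 * k + 1) / (2 * (4 ^ k * ((Nat.factorial k : ℝ) * (Nat.factorial (k + 1) : ℝ)))) := by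
    rw [div_pow, h2pow, div_mul_div_comm, one_mul]
    congr 1
    ring
  have rhs_eq : (z / 2) * (z ^ (2 * k) / (Nat.factorial (2 * k) : ℝ))
      = z ^ (2 * k + 1) / (2 * (Nat.factorial (2 * k) : ℝ)) := by
    rw [div_mul_div_comm, pow_succ, mul_comm z (z ^ (2 * k))]
  rw [lhs_eq, rhs_eq]
  have hnum : (0 : ℝ) ≤ z ^ (2 * k + 1) := pow_nonneg hz _
  gcongr

lemma besselI1_summable {z : ℝ} (hz : 0 ≤ z) :
    Summable (fun k : ℕ =>
      (1 / ((Nat.factorial k : ℝ) * (Nat.factorial (k + 1) : ℝ))) * (z / 2) ^ (2 * k + 1)) := by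
  have hg : Summable (fun n : ℕ => (z / 2) * (z ^ n / (Nat.factorial n : ℝ))) :=
    (Real.summable_pow_div_factorial z).mul_left _
  have hcomp : Summable ((fun n : ℕ => (z / 2) * (z ^ n / (Nat.factorial n : ℝ))) ∘ fun k => 2 * k) :=
    hg.comp_injective (mul_right_injective₀ two_ne_zero)
  exact Summable.of_nonneg_of_le (besselI1_term_nonneg hz) (besselI1_term_le hz) hcomp

lemma besselI1_le {z : ℝ} (hz : 0 ≤ z) : besselI1 z ≤ (z / 2) * Real.exp z := by
  have hexp : Real.exp z = ∑' n : ℕ, z ^ n / (Nat.factorial n : ℝ) := by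
    rw [Real.exp_eq_exp_ℝ, NormedSpace.exp_eq_tsum_div]
  have hg : Summable (fun n : ℕ => (z / 2) * (z ^ n / (Nat.factorial n : ℝ))) :=
    (Real.summable_pow_div_factorial z).mul_left _
  have key : besselI1 z ≤ ∑' n : ℕ, (z / 2) * (z ^ n / (Nat.factorial n : ℝ)) := by
    refine Summable.tsum_le_tsum_of_inj (fun k => 2 * k) (mul_right_injective₀ two_ne_zero)
      (fun c _ => mul_nonneg (by linarith)
        (div_nonneg (pow_nonneg hz _) (Nat.cast_nonneg _)))
      (besselI1_term_le hz) (besselI1_summable hz) hg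
  calc besselI1 z ≤ ∑' n : ℕ, (z / 2) * (z ^ n / (Nat.factorial n : ℝ)) := key
    _ = (z / 2) * Real.exp z := by rw [tsum_mul_left, hexp]

lemma besselI1_comp_measurable (t : ℝ) :
    Measurable (fun s : ℝ => besselI1 (2 * Real.sqrt (s * t))) := by
  apply measurable_of_tendsto_metrizable
    (f := fun n s => ∑ k ∈ Finset.range n,
      (1 / ((Nat.factorial k : ℝ) * (Nat.factorial (k + 1) : ℝ)))
        * (2 * Real.sqrt (s * t) / 2) ^ (2 * k + 1))
  · intro n
    apply Finset.measurable_sum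
    intro k _
    apply Measurable.const_mul
    exact ((((measurable_id.mul_const t).sqrt).const_mul 2).div_const 2).pow_const _
  · rw [tendsto_pi_nhds]
    intro s
    have hz : (0 : ℝ) ≤ 2 * Real.sqrt (s * t) := by positivity
    exact (besselI1_summable hz).hasSum.tendsto_sum_nat

theorem stmt2 (p : ℝ → ℝ) (hmeas : Measurable p) (hpos : ∀ s, 0 ≤ s → 0 ≤ p s)
    (C ε : ℝ) (hC : 0 < C) (hε : 0 < ε)
    (hbound : ∀ s, 0 ≤ s → p s ≤ C * Real.exp (-ε * s)) :
    ∃ δ > (0 : ℝ),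
      (∃ C' > (0 : ℝ), ∀ t, 0 ≤ t → vFun p t ≤ C' * Real.exp ((1 - δ) * t)) ∧
      (∃ C'' : ℝ, ∀ t, 0 ≤ t → δ * t - C'' ≤ t - Real.log (1 + vFun p t)) := by
  set α : ℝ := 1 + ε / 2 with hα_def
  have hα1 : 1 < α := by simp [hα_def]; linarith
  have hα0 : 0 < α := by linarith
  set δ : ℝ := ε / (2 * (2 + ε)) with hδ_def
  have hδ0 : 0 < δ := by positivity
  have hδlt : δ < 1 := by
    rw [hδ_def, div_lt_one (by positivity)]
    linarith
  have hδα : 1 / α + δ = 1 - δ := by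
    rw [hδ_def, hα_def]
    field_simp
    ring
  set C' : ℝ := C * (2 / ε) * (1 + 1 / δ) with hC'_def
  have hC'0 : 0 < C' := by positivity
  -- nonnegativity of vFun
  have hv_nonneg : ∀ t : ℝ, 0 ≤ t → 0 ≤ vFun p t := by
    intro t ht
    apply setIntegral_nonneg measurableSet_Ioi
    intro s hs
    have hs0 : 0 < s := hs
    have hz : (0 : ℝ) ≤ 2 * Real.sqrt (s * t) := by positivity
    exact mul_nonneg (mul_nonneg (mul_nonneg (hpos s hs0.le) (Real.exp_pos _).le)
      (Real.sqrt_nonneg _)) (besselI1_nonneg hz)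
  -- the core integral bound
  have hcore : ∀ t : ℝ, 0 ≤ t → vFun p t ≤ C * t * Real.exp (t / α) * (2 / ε) := by
    intro t ht
    set g : ℝ → ℝ := fun s => C * t * Real.exp (t / α) * Real.exp (-(ε / 2) * s) with hg_def
    set f : ℝ → ℝ := fun s =>
      p s * Real.exp (-s) * Real.sqrt (t / s) * besselI1 (2 * Real.sqrt (s * t)) with hf_def
    have hg_int : IntegrableOn g (Ioi (0 : ℝ)) :=
      (exp_neg_integrableOn_Ioi 0 (half_pos hε)).const_mul _
    have hfg : ∀ s ∈ Ioi (0 : ℝ), f s ≤ g s := by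
      intro s hs
      have hs0 : 0 < s := hs
      have hst : (0 : ℝ) ≤ s * t := mul_nonneg hs0.le ht
      have hz : (0 : ℝ) ≤ 2 * Real.sqrt (s * t) := by positivity
      have hb : besselI1 (2 * Real.sqrt (s * t))
          ≤ Real.sqrt (s * t) * Real.exp (2 * Real.sqrt (s * t)) := by
        have := besselI1_le hz
        have h2 : 2 * Real.sqrt (s * t) / 2 = Real.sqrt (s * t) := by ring
        rwa [h2] at this
      have hsqrt : Real.sqrt (t / s) * Real.sqrt (s * t) = t := by
        rw [← Real.sqrt_mul (div_nonneg ht hs0.le)]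
        have : t / s * (s * t) = t * t := by field_simp
        rw [this, Real.sqrt_mul_self ht]
      have hAM : 2 * Real.sqrt (s * t) ≤ α * s + t / α := by
        have key := two_mul_le_add_sq (Real.sqrt (α * s)) (Real.sqrt (t / α))
        have h1 : Real.sqrt (α * s) * Real.sqrt (t / α) = Real.sqrt (s * t) := by
          rw [← Real.sqrt_mul (mul_nonneg hα0.le hs0.le)]
          congr 1
          field_simp
        have h2 : Real.sqrt (α * s) ^ 2 = α * s := Real.sq_sqrt (mul_nonneg hα0.le hs0.le)
        have h3 : Real.sqrt (t / α) ^ 2 = t / α := Real.sq_sqrt (div_nonneg ht hα0.le)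
        rw [mul_assoc, h1, h2, h3] at key
        linarith
      have step1 : f s ≤ C * Real.exp (-ε * s) * Real.exp (-s) * Real.sqrt (t / s)
          * (Real.sqrt (s * t) * Real.exp (2 * Real.sqrt (s * t))) := by
        have hp0 := hpos s hs0.le
        have hbd := hbound s hs0.le
        have hbess0 := besselI1_nonneg hz
        have hleft : p s * Real.exp (-s) * Real.sqrt (t / s)
            ≤ C * Real.exp (-ε * s) * Real.exp (-s) * Real.sqrt (t / s) :=
          mul_le_mul_of_nonneg_right (mul_le_mul_of_nonneg_right hbd (Real.exp_pos _).le)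
            (Real.sqrt_nonneg _)
        exact mul_le_mul hleft hb hbess0 (by positivity)
      have step2 : C * Real.exp (-ε * s) * Real.exp (-s) * Real.sqrt (t / s)
          * (Real.sqrt (s * t) * Real.exp (2 * Real.sqrt (s * t)))
          = C * t * (Real.exp (-ε * s) * Real.exp (-s) * Real.exp (2 * Real.sqrt (s * t))) := by
        calc C * Real.exp (-ε * s) * Real.exp (-s) * Real.sqrt (t / s)
            * (Real.sqrt (s * t) * Real.exp (2 * Real.sqrt (s * t)))
            = C * (Real.sqrt (t / s) * Real.sqrt (s * t))
              * (Real.exp (-ε * s) * Real.exp (-s) * Real.exp (2 * Real.sqrt (s * t))) := by ring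
          _ = _ := by rw [hsqrt]
      have step3 : C * t * (Real.exp (-ε * s) * Real.exp (-s) * Real.exp (2 * Real.sqrt (s * t)))
          ≤ C * t * (Real.exp (-ε * s) * Real.exp (-s) * Real.exp (α * s + t / α)) := by
        have hCt : 0 ≤ C * t := mul_nonneg hC.le ht
        gcongr
      have step4 : C * t * (Real.exp (-ε * s) * Real.exp (-s) * Real.exp (α * s + t / α))
          = g s := by
        rw [hg_def, ← Real.exp_add, ← Real.exp_add]
        have : -ε * s + -s + (α * s + t / α) = t / α + -(ε / 2) * s := by
          rw [hα_def]; ring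
        rw [this, Real.exp_add]
        ring
      calc f s ≤ _ := step1
        _ = _ := step2
        _ ≤ _ := step3
        _ = g s := step4
    have hf_nonneg : ∀ s ∈ Ioi (0 : ℝ), 0 ≤ f s := by
      intro s hs
      have hs0 : 0 < s := hs
      have hz : (0 : ℝ) ≤ 2 * Real.sqrt (s * t) := by positivity
      exact mul_nonneg (mul_nonneg (mul_nonneg (hpos s hs0.le) (Real.exp_pos _).le)
        (Real.sqrt_nonneg _)) (besselI1_nonneg hz)
    have hf_meas : Measurable f := by
      apply Measurable.mul
      · apply Measurable.mul
        · exact hmeas.mul (measurable_id.neg.exp)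
        · exact (measurable_const.div measurable_id).sqrt
      · exact besselI1_comp_measurable t
    have hf_int : IntegrableOn f (Ioi (0 : ℝ)) := by
      apply hg_int.mono' (hf_meas.aestronglyMeasurable)
      filter_upwards [ae_restrict_mem measurableSet_Ioi] with s hs
      rw [Real.norm_eq_abs, abs_of_nonneg (hf_nonneg s hs)]
      exact hfg s hs
    have hle : vFun p t ≤ ∫ s in Ioi (0 : ℝ), g s := by
      have : vFun p t = ∫ s in Ioi (0 : ℝ), f s := rfl
      rw [this]
      exact setIntegral_mono_on hf_int hg_int measurableSet_Ioi hfg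
    have hgval : (∫ s in Ioi (0 : ℝ), g s) = C * t * Real.exp (t / α) * (2 / ε) := by
      rw [hg_def]
      simp only []
      rw [MeasureTheory.integral_const_mul]
      have hint : (∫ s in Ioi (0 : ℝ), Real.exp (-(ε / 2) * s)) = 2 / ε := by
        have := integral_comp_mul_left_Ioi (fun u => Real.exp (-u)) 0 (half_pos hε)
        simp only [mul_zero] at this
        have heq : (∫ s in Ioi (0 : ℝ), Real.exp (-(ε / 2) * s))
            = ∫ s in Ioi (0 : ℝ), Real.exp (-(ε / 2 * s)) := by
          congr 1; ext s; rw [neg_mul]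
        rw [heq, this, integral_exp_neg_Ioi_zero, smul_eq_mul, mul_one]
        rw [inv_eq_one_div]
        field_simp
      rw [hint]
    rw [hgval] at hle
    exact hle
  refine ⟨δ, hδ0, ⟨C', hC'0, ?_⟩, ⟨Real.log (1 + C'), ?_⟩⟩
  · -- first part
    intro t ht
    have h1 := hcore t ht
    have h2 : C * t * Real.exp (t / α) * (2 / ε) ≤ C' * Real.exp ((1 - δ) * t) := by
      have ht' : t ≤ (1 + 1 / δ) * Real.exp (δ * t) := by
        have hexp : 1 + δ * t ≤ Real.exp (δ * t) := Real.add_one_le_exp (δ * t) |>.trans_eq' (by ring)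
        have h1δ : (0 : ℝ) < 1 / δ := by positivity
        calc t ≤ (1 + 1 / δ) * (1 + δ * t) := by
              have : (1 + 1 / δ) * (1 + δ * t) = 1 + δ * t + 1 / δ + (1 / δ) * (δ * t) := by ring
              rw [this]
              have : (1 / δ) * (δ * t) = t := by field_simp
              rw [this]
              nlinarith [mul_nonneg hδ0.le ht]
          _ ≤ (1 + 1 / δ) * Real.exp (δ * t) := by
              have : (0 : ℝ) ≤ 1 + 1 / δ := by positivity
              exact mul_le_mul_of_nonneg_left hexp this
      calc C * t * Real.exp (t / α) * (2 / ε)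
          = C * (2 / ε) * (t * Real.exp (t / α)) := by ring
        _ ≤ C * (2 / ε) * ((1 + 1 / δ) * Real.exp (δ * t) * Real.exp (t / α)) := by
            have hc0 : (0 : ℝ) ≤ C * (2 / ε) := by positivity
            have hexp0 : (0 : ℝ) < Real.exp (t / α) := Real.exp_pos _
            apply mul_le_mul_of_nonneg_left _ hc0
            exact mul_le_mul_of_nonneg_right ht' hexp0.le
        _ = C * (2 / ε) * (1 + 1 / δ) * (Real.exp (δ * t) * Real.exp (t / α)) := by ring
        _ = C' * Real.exp ((1 - δ) * t) := by
            have inner : Real.exp (δ * t) * Real.exp (t / α) = Real.exp ((1 - δ) * t) := by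
              rw [← Real.exp_add]
              congr 1
              linear_combination t * hδα
            rw [inner, hC'_def]
    linarith
  · -- second part
    intro t ht
    have hv0 := hv_nonneg t ht
    have hv1 : vFun p t ≤ C' * Real.exp ((1 - δ) * t) := by
      have h1 := hcore t ht
      have h2 : C * t * Real.exp (t / α) * (2 / ε) ≤ C' * Real.exp ((1 - δ) * t) := by
        -- reuse the computation above by a direct proof
        have ht' : t ≤ (1 + 1 / δ) * Real.exp (δ * t) := by
          have hexp : 1 + δ * t ≤ Real.exp (δ * t) := Real.add_one_le_exp (δ * t) |>.trans_eq' (by ring)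
          have h1δ : (0 : ℝ) < 1 / δ := by positivity
          calc t ≤ (1 + 1 / δ) * (1 + δ * t) := by
                have e1 : (1 + 1 / δ) * (1 + δ * t) = 1 + δ * t + 1 / δ + (1 / δ) * (δ * t) := by ring
                rw [e1]
                have e2 : (1 / δ) * (δ * t) = t := by field_simp
                rw [e2]
                nlinarith [mul_nonneg hδ0.le ht]
            _ ≤ (1 + 1 / δ) * Real.exp (δ * t) := by
                have : (0 : ℝ) ≤ 1 + 1 / δ := by positivity
                exact mul_le_mul_of_nonneg_left hexp this
        calc C * t * Real.exp (t / α) * (2 / ε)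
            = C * (2 / ε) * (t * Real.exp (t / α)) := by ring
          _ ≤ C * (2 / ε) * ((1 + 1 / δ) * Real.exp (δ * t) * Real.exp (t / α)) := by
              have hc0 : (0 : ℝ) ≤ C * (2 / ε) := by positivity
              have hexp0 : (0 : ℝ) < Real.exp (t / α) := Real.exp_pos _
              apply mul_le_mul_of_nonneg_left _ hc0
              exact mul_le_mul_of_nonneg_right ht' hexp0.le
          _ = C * (2 / ε) * (1 + 1 / δ) * (Real.exp (δ * t) * Real.exp (t / α)) := by ring
          _ = C' * Real.exp ((1 - δ) * t) := by
              have inner : Real.exp (δ * t) * Real.exp (t / α) = Real.exp ((1 - δ) * t) := by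
                rw [← Real.exp_add]
                congr 1
                linear_combination t * hδα
              rw [inner, hC'_def]
      linarith
    have hexp1 : (1 : ℝ) ≤ Real.exp ((1 - δ) * t) :=
      Real.one_le_exp (mul_nonneg (by linarith) ht)
    have hlog : Real.log (1 + vFun p t) ≤ Real.log (1 + C') + (1 - δ) * t := by
      have h1v : (0 : ℝ) < 1 + vFun p t := by linarith
      have hub : 1 + vFun p t ≤ (1 + C') * Real.exp ((1 - δ) * t) := by
        have : (1 + C') * Real.exp ((1 - δ) * t)
            = Real.exp ((1 - δ) * t) + C' * Real.exp ((1 - δ) * t) := by ring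
        rw [this]
        linarith
      calc Real.log (1 + vFun p t) ≤ Real.log ((1 + C') * Real.exp ((1 - δ) * t)) :=
            Real.log_le_log h1v hub
        _ = Real.log (1 + C') + (1 - δ) * t := by
            rw [Real.log_mul (by linarith) (Real.exp_pos _).ne', Real.log_exp]
    nlinarith [hlog]
end

section
/- Let a ∈ [−∞,∞), b ∈ (−∞,∞], and let V, q : (a,b) → ℝ be real-analytic. Suppose V has a unique global minimum at a point t₀ ∈ (a,b), with V′(t₀) = 0 and V″(t₀) > 0, that q(t₀) ≠ 0, and that ∫ₐᵇ e^{−NV(t)}|q(t)| dt < ∞ for some N. Then as N → ∞, ∫ₐᵇ e^{−NV(t)} q(t) dt ~ e^{−NV(t₀)}·q(t₀)·√(2π/(N·V″(t₀))). -/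
open MeasureTheory Filter Set Topology Real

/-- The real interval `(a, b)` with extended-real endpoints. -/
def erealIoo (a b : EReal) : Set ℝ := {t : ℝ | a < (t : EReal) ∧ (t : EReal) < b}

private lemma tendsto_of_abs_sub_le {f : ℝ → ℝ} {L : ℝ}
    (h : ∀ ε > (0:ℝ), ∀ᶠ N in atTop, |f N - L| ≤ ε) : Tendsto f atTop (𝓝 L) := by
  rw [Metric.tendsto_nhds]
  intro ε hε
  filter_upwards [h (ε/2) (by positivity)] with N hN
  rw [Real.dist_eq]
  linarith

private lemma gauss_shift (k t₀ : ℝ) :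
    ∫ t : ℝ, Real.exp (-k * (t - t₀)^2) = Real.sqrt (π / k) := by
  rw [← integral_gaussian k]
  exact integral_sub_right_eq_self (fun t => Real.exp (-k * t^2)) t₀

private lemma gauss_shift_integrable {k : ℝ} (hk : 0 < k) (t₀ : ℝ) :
    Integrable (fun t : ℝ => Real.exp (-k * (t - t₀)^2)) :=
  (integrable_exp_neg_mul_sq hk).comp_sub_right t₀

private lemma sqrt_mul_exp_decay {k : ℝ} (hk : 0 < k) :
    Tendsto (fun N : ℝ => Real.sqrt N * Real.exp (-(k * N))) atTop (𝓝 0) := by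
  have h1 : Tendsto (fun N : ℝ => (1/k) * ((k*N) ^ 1 * Real.exp (-(k * N)))) atTop (𝓝 0) := by
    have := ((tendsto_pow_mul_exp_neg_atTop_nhds_zero 1).comp
      (tendsto_id.const_mul_atTop hk))
    simpa [Function.comp] using this.const_mul (1/k)
  apply squeeze_zero' (g := fun N : ℝ => (1/k) * ((k*N)^1 * Real.exp (-(k*N)))) ?_ ?_ h1
  · filter_upwards [eventually_ge_atTop (0:ℝ)] with N hN
    positivity
  · filter_upwards [eventually_ge_atTop (1:ℝ)] with N hN
    have h0 : (0:ℝ) ≤ N := by linarith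
    have h2 : Real.sqrt N ≤ N := by
      calc Real.sqrt N ≤ Real.sqrt (N^2) := Real.sqrt_le_sqrt (by nlinarith)
      _ = N := Real.sqrt_sq h0
    have h3 : (1/k) * ((k*N)^1 * Real.exp (-(k*N))) = N * Real.exp (-(k*N)) := by
      field_simp
    rw [h3]
    exact mul_le_mul_of_nonneg_right h2 (Real.exp_nonneg _)

set_option maxHeartbeats 2000000 in
theorem stmt7 (a b : EReal) (hab : a < b) (V q : ℝ → ℝ) (t₀ : ℝ)
    (ht₀ : t₀ ∈ erealIoo a b)
    (hVan : AnalyticOnNhd ℝ V (erealIoo a b))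
    (hqan : AnalyticOnNhd ℝ q (erealIoo a b))
    -- V has a unique global minimum at t₀
    (hmin : ∀ t ∈ erealIoo a b, t ≠ t₀ → V t₀ < V t)
    (hmin' : ∀ ε > (0 : ℝ), ∃ c > (0 : ℝ),
      ∀ t ∈ erealIoo a b, ε ≤ |t - t₀| → V t₀ + c ≤ V t)
    (hV' : deriv V t₀ = 0) (hV'' : 0 < deriv (deriv V) t₀)
    (hq : q t₀ ≠ 0)
    -- absolute integrability for some N
    (hint : ∃ N : ℝ, IntegrableOn (fun t => Real.exp (-N * V t) * |q t|) (erealIoo a b)) :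
    Tendsto (fun N : ℝ =>
        (∫ t in erealIoo a b, Real.exp (-N * V t) * q t) /
          (Real.exp (-N * V t₀) * q t₀ * Real.sqrt (2 * π / (N * deriv (deriv V) t₀))))
      atTop (𝓝 1) := by
  set S : Set ℝ := erealIoo a b with hSdef
  set c : ℝ := deriv (deriv V) t₀ with hcdef
  set A : ℝ := c / 2 with hAdef
  have hA : 0 < A := by positivity
  set W : ℝ → ℝ := fun t => V t - V t₀ with hWdef
  -- basic facts
  have hSopen : IsOpen S := by
    have : S = (fun t : ℝ => (t : EReal)) ⁻¹' (Set.Ioo a b) := rfl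
    rw [this]; exact isOpen_Ioo.preimage continuous_coe_real_ereal
  have hSmeas : MeasurableSet S := hSopen.measurableSet
  have hW0 : ∀ t ∈ S, 0 ≤ W t := by
    intro t ht
    rcases eq_or_ne t t₀ with rfl | hne
    · simp [hWdef]
    · have := hmin t ht hne; simp [hWdef]; linarith
  have hVcont : ContinuousOn V S := hVan.continuousOn
  have hqcont : ContinuousOn q S := hqan.continuousOn
  have hWcont : ContinuousOn W S := hVcont.sub continuousOn_const
  obtain ⟨N₀, hI₀⟩ := hint
  -- base integrable function
  have hbase : IntegrableOn (fun t => Real.exp (-(N₀ * W t)) * |q t|) S := by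
    have : (fun t => Real.exp (-(N₀ * W t)) * |q t|)
        = fun t => Real.exp (N₀ * V t₀) * (Real.exp (-N₀ * V t) * |q t|) := by
      funext t
      rw [← mul_assoc, ← Real.exp_add]
      simp only [hWdef]
      ring_nf
    rw [this]
    exact hI₀.const_mul _
  set C' : ℝ := ∫ t in S, Real.exp (-(N₀ * W t)) * |q t| with hC'def
  have hC'0 : 0 ≤ C' := setIntegral_nonneg hSmeas (fun t _ => by positivity)
  -- integrability of the integrand for N ≥ N₀
  have hmeasJ : ∀ N : ℝ, AEStronglyMeasurable (fun t => Real.exp (-(N * W t)) * q t)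
      (volume.restrict S) := by
    intro N
    exact (((Real.continuous_exp.comp_continuousOn
      ((continuousOn_const.mul hWcont).neg)).mul hqcont)).aestronglyMeasurable hSmeas
  have hJint : ∀ N : ℝ, N₀ ≤ N → IntegrableOn (fun t => Real.exp (-(N * W t)) * q t) S := by
    intro N hN
    apply Integrable.mono' hbase (hmeasJ N)
    apply (ae_restrict_mem hSmeas).mono
    intro t ht
    have h1 : Real.exp (-(N * W t)) ≤ Real.exp (-(N₀ * W t)) := by
      apply Real.exp_le_exp.2
      linarith only [mul_le_mul_of_nonneg_right hN (hW0 t ht)]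
    rw [norm_mul, Real.norm_eq_abs, Real.norm_eq_abs, Real.abs_exp]
    exact mul_le_mul_of_nonneg_right h1 (abs_nonneg _)
  -- the key limit
  have key : Tendsto (fun N : ℝ => Real.sqrt N * ∫ t in S, Real.exp (-(N * W t)) * q t)
      atTop (𝓝 (q t₀ * Real.sqrt (π / A))) := by
    apply tendsto_of_abs_sub_le
    intro ε hε
    set M : ℝ := |q t₀| + 1 with hMdef
    have hM : 0 < M := by positivity
    have hqM : |q t₀| ≤ M := by simp [hMdef]
    -- choose ε₁ by continuity of x ↦ √(π/(A∓x)) at 0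
    have hFcont : ContinuousAt (fun x : ℝ => Real.sqrt (π / (A - x))) 0 := by
      apply Real.continuous_sqrt.continuousAt.comp
      exact continuousAt_const.div (continuousAt_const.sub continuousAt_id)
        (by simpa using hA.ne')
    have hGcont : ContinuousAt (fun x : ℝ => Real.sqrt (π / (A + x))) 0 := by
      apply Real.continuous_sqrt.continuousAt.comp
      exact continuousAt_const.div (continuousAt_const.add continuousAt_id)
        (by simpa using hA.ne')
    have hεM : 0 < ε / (6 * M) := by positivity
    have hevF : ∀ᶠ x in 𝓝 (0:ℝ), dist (Real.sqrt (π / (A - x))) (Real.sqrt (π / (A - 0))) ≤ ε / (6*M)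
        ∧ dist (Real.sqrt (π / (A + x))) (Real.sqrt (π / (A + 0))) ≤ ε / (6*M) := by
      have h1 := hFcont.tendsto (Metric.closedBall_mem_nhds _ hεM)
      have h2 := hGcont.tendsto (Metric.closedBall_mem_nhds _ hεM)
      filter_upwards [h1, h2] with x hx1 hx2
      exact ⟨Metric.mem_closedBall.1 hx1, Metric.mem_closedBall.1 hx2⟩
    obtain ⟨δc, hδc, hδcball⟩ := Metric.eventually_nhds_iff.1 hevF
    set ε₁ : ℝ := min (A/2) (δc/2) with hε₁def
    have hε₁pos : 0 < ε₁ := lt_min (by positivity) (by positivity)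
    have hε₁A : ε₁ ≤ A/2 := min_le_left _ _
    have hε₁δc : dist ε₁ 0 < δc := by
      rw [Real.dist_eq, sub_zero, abs_of_pos hε₁pos]
      calc ε₁ ≤ δc/2 := min_le_right _ _
      _ < δc := by linarith
    have hφψ := hδcball hε₁δc
    set α : ℝ := A - ε₁ with hαdef
    set β : ℝ := A + ε₁ with hβdef
    have hαpos : 0 < α := by rw [hαdef]; linarith
    have hβpos : 0 < β := by rw [hβdef]; linarith
    have hφ : |Real.sqrt (π / α) - Real.sqrt (π / A)| ≤ ε / (6*M) := by
      have := hφψ.1; rw [Real.dist_eq, sub_zero] at this; exact this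
    have hψ : |Real.sqrt (π / β) - Real.sqrt (π / A)| ≤ ε / (6*M) := by
      have := hφψ.2; rw [Real.dist_eq, add_zero] at this; exact this
    -- choose ε₂
    set K : ℝ := Real.sqrt (π / (A/2)) with hKdef
    have hK : 0 < K := Real.sqrt_pos.2 (by positivity)
    have hαK : Real.sqrt (π / α) ≤ K := by
      rw [hKdef]
      apply Real.sqrt_le_sqrt
      exact div_le_div_of_nonneg_left pi_pos.le (by positivity) (by rw [hαdef]; linarith)
    set ε₂ : ℝ := min 1 (ε / (6*K)) with hε₂def
    have hε₂pos : 0 < ε₂ := lt_min one_pos (by positivity)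
    have hε₂K : ε₂ * K ≤ ε / 6 := by
      have h1 : ε₂ ≤ ε / (6*K) := min_le_right _ _
      calc ε₂ * K ≤ (ε / (6*K)) * K := mul_le_mul_of_nonneg_right h1 hK.le
      _ = ε / 6 := by field_simp
    -- choose δ
    have h2c : ContinuousAt (deriv (deriv V)) t₀ := ((hVan.deriv.deriv) t₀ ht₀).continuousAt
    have hqcAt : ContinuousAt q t₀ := (hqan t₀ ht₀).continuousAt
    have hUev : ∀ᶠ t in 𝓝 t₀, t ∈ S ∧ |deriv (deriv V) t - c| ≤ ε₁ ∧ |q t - q t₀| ≤ ε₂ := by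
      have e1 : ∀ᶠ t in 𝓝 t₀, t ∈ S := hSopen.mem_nhds ht₀
      have e2 := h2c.tendsto (Metric.closedBall_mem_nhds _ hε₁pos)
      have e3 := hqcAt.tendsto (Metric.closedBall_mem_nhds _ hε₂pos)
      filter_upwards [e1, e2, e3] with t h1 h2 h3
      refine ⟨h1, ?_, ?_⟩
      · have := Metric.mem_closedBall.1 h2; rwa [Real.dist_eq] at this
      · have := Metric.mem_closedBall.1 h3; rwa [Real.dist_eq] at this
    obtain ⟨r, hr, hrball⟩ := Metric.eventually_nhds_iff.1 hUev
    set δ : ℝ := r/2 with hδdef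
    have hδpos : 0 < δ := by positivity
    have hball : ∀ t ∈ Metric.closedBall t₀ δ,
        t ∈ S ∧ |deriv (deriv V) t - c| ≤ ε₁ ∧ |q t - q t₀| ≤ ε₂ := by
      intro t ht
      exact hrball (lt_of_le_of_lt (Metric.mem_closedBall.1 ht) (by rw [hδdef]; linarith))
    have hcbS : Metric.closedBall t₀ δ ⊆ S := fun t ht => (hball t ht).1
    set B : Set ℝ := Ioo (t₀ - δ) (t₀ + δ) with hBdef
    have hBcb : B ⊆ Metric.closedBall t₀ δ := by
      rw [Real.closedBall_eq_Icc]; exact Ioo_subset_Icc_self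
    have hBS : B ⊆ S := fun t ht => hcbS (hBcb ht)
    -- Taylor estimate
    have hg1 : ∀ x ∈ Metric.closedBall t₀ δ, |deriv V x - c * (x - t₀)| ≤ ε₁ * |x - t₀| := by
      intro x hx
      have hmvt := Convex.norm_image_sub_le_of_norm_hasDerivWithin_le
        (f := fun y => deriv V y - c * (y - t₀)) (f' := fun y => deriv (deriv V) y - c)
        (s := Metric.closedBall t₀ δ) (C := ε₁)
        (fun y hy => ((((hVan.deriv y (hcbS hy)).differentiableAt).hasDerivAt).sub
          ((((hasDerivAt_id y).sub_const t₀).const_mul c).congr_deriv (mul_one c))).hasDerivWithinAt)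
        (fun y hy => by
          rw [Real.norm_eq_abs]; exact (hball y hy).2.1)
        (convex_closedBall _ _) (Metric.mem_closedBall_self hδpos.le) hx
      rw [Real.norm_eq_abs, Real.norm_eq_abs] at hmvt
      simpa [hV'] using hmvt
    have hTay : ∀ t ∈ Metric.closedBall t₀ δ, |W t - A * (t - t₀)^2| ≤ ε₁ * (t - t₀)^2 := by
      intro t ht
      have htle : |t - t₀| ≤ δ := by
        have := Metric.mem_closedBall.1 ht; rwa [Real.dist_eq] at this
      have hsub : Metric.closedBall t₀ |t - t₀| ⊆ Metric.closedBall t₀ δ :=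
        Metric.closedBall_subset_closedBall htle
      have hmvt := Convex.norm_image_sub_le_of_norm_hasDerivWithin_le
        (f := fun y => V y - A * (y - t₀)^2) (f' := fun y => deriv V y - c * (y - t₀))
        (s := Metric.closedBall t₀ |t - t₀|) (C := ε₁ * |t - t₀|)
        (fun y hy => ((((hVan y (hcbS (hsub hy))).differentiableAt).hasDerivAt).sub
          (((((hasDerivAt_id y).sub_const t₀).pow 2).const_mul A).congr_deriv
            (by rw [hAdef]; push_cast; simp only [id_eq]; ring))).hasDerivWithinAt)
        (fun y hy => by
          rw [Real.norm_eq_abs]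
          have h1 := hg1 y (hsub hy)
          have h2 : |y - t₀| ≤ |t - t₀| := by
            have := Metric.mem_closedBall.1 hy; rwa [Real.dist_eq] at this
          calc |deriv V y - c * (y - t₀)| ≤ ε₁ * |y - t₀| := h1
          _ ≤ ε₁ * |t - t₀| := mul_le_mul_of_nonneg_left h2 hε₁pos.le)
        (convex_closedBall _ _) (Metric.mem_closedBall_self (abs_nonneg _))
        (by rw [Metric.mem_closedBall, Real.dist_eq])
      rw [Real.norm_eq_abs, Real.norm_eq_abs] at hmvt
      have hsq : |t - t₀| * |t - t₀| = (t - t₀)^2 := by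
        rw [← abs_mul, ← sq, abs_sq]
      calc |W t - A * (t - t₀)^2|
          = |(V t - A * (t - t₀)^2) - (V t₀ - A * (t₀ - t₀)^2)| := by
            rw [hWdef]; ring_nf
      _ ≤ ε₁ * |t - t₀| * |t - t₀| := hmvt
      _ = ε₁ * (t - t₀)^2 := by rw [mul_assoc, hsq]
    have hWlow : ∀ t ∈ B, α * (t - t₀)^2 ≤ W t := by
      intro t ht
      obtain ⟨h1, h2⟩ := abs_le.1 (hTay t (hBcb ht))
      rw [hαdef]; linarith only [h1]
    have hWup : ∀ t ∈ B, W t ≤ β * (t - t₀)^2 := by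
      intro t ht
      obtain ⟨h1, h2⟩ := abs_le.1 (hTay t (hBcb ht))
      rw [hβdef]; linarith only [h2]
    -- tail constant
    obtain ⟨c₀, hc₀pos, hc₀⟩ := hmin' δ hδpos
    have hWtail : ∀ t ∈ S \ B, c₀ ≤ W t := by
      rintro t ⟨htS, htB⟩
      have hd : δ ≤ |t - t₀| := by
        by_contra h
        push_neg at h
        obtain ⟨h1, h2⟩ := abs_lt.1 h
        exact htB ⟨by linarith, by linarith⟩
      have := hc₀ t htS hd
      rw [hWdef]; simp only; linarith only [this]
    -- eventual smallness of error terms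
    set k₂ : ℝ := β * δ^2 / 2 with hk₂def
    have hk₂pos : 0 < k₂ := by rw [hk₂def]; positivity
    have hev1 : ∀ᶠ N in atTop, M * (Real.sqrt (π / (β/2)) * Real.exp (-(k₂ * N))) < ε/3 := by
      have h0 : Tendsto (fun N : ℝ => Real.exp (-(k₂ * N))) atTop (𝓝 0) :=
        Real.tendsto_exp_neg_atTop_nhds_zero.comp (tendsto_id.const_mul_atTop hk₂pos)
      have h1 := (h0.const_mul (Real.sqrt (π / (β/2)))).const_mul M
      simp only [mul_zero] at h1
      exact h1.eventually (gt_mem_nhds (by positivity))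
    have hev2 : ∀ᶠ N in atTop,
        (Real.exp (N₀ * c₀) * C') * (Real.sqrt N * Real.exp (-(c₀ * N))) < ε/3 + 1 := by
      have h1 := (sqrt_mul_exp_decay hc₀pos).const_mul (Real.exp (N₀ * c₀) * C')
      simp only [mul_zero] at h1
      exact h1.eventually (gt_mem_nhds (by positivity))
    have hev2' : ∀ᶠ N in atTop,
        (Real.exp (N₀ * c₀) * C') * (Real.sqrt N * Real.exp (-(c₀ * N))) ≤ ε/3 := by
      have h1 := (sqrt_mul_exp_decay hc₀pos).const_mul (Real.exp (N₀ * c₀) * C')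
      simp only [mul_zero] at h1
      filter_upwards [h1.eventually (gt_mem_nhds (show (0:ℝ) < ε/3 by positivity))] with N hN
      exact hN.le
    filter_upwards [eventually_ge_atTop (1:ℝ), eventually_ge_atTop N₀, hev1, hev2'] with N hN1 hNN₀ hevE hevT
    have hNpos : 0 < N := by linarith
    -- integrability on B and elsewhere, for this N
    have hIccS : Icc (t₀ - δ) (t₀ + δ) ⊆ S := by
      rw [← Real.closedBall_eq_Icc]; exact hcbS
    have hconte : ContinuousOn (fun t => Real.exp (-(N * W t))) (Icc (t₀ - δ) (t₀ + δ)) :=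
      Real.continuous_exp.comp_continuousOn ((continuousOn_const.mul (hWcont.mono hIccS)).neg)
    have ibG : IntegrableOn (fun t => Real.exp (-(N * W t))) B :=
      (hconte.integrableOn_Icc).mono_set Ioo_subset_Icc_self
    have ibEq : IntegrableOn (fun t => Real.exp (-(N * W t)) * (q t - q t₀)) B := by
      apply (ContinuousOn.integrableOn_Icc ?_).mono_set (Ioo_subset_Icc_self)
      exact hconte.mul ((hqcont.mono hIccS).sub continuousOn_const)
    have ibQ : IntegrableOn (fun t => Real.exp (-(N * W t)) * q t) B := by
      apply (ContinuousOn.integrableOn_Icc ?_).mono_set (Ioo_subset_Icc_self)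
      exact hconte.mul (hqcont.mono hIccS)
    have igα : Integrable (fun t : ℝ => Real.exp (-(N*α) * (t - t₀)^2)) :=
      gauss_shift_integrable (by positivity) t₀
    have igβ : Integrable (fun t : ℝ => Real.exp (-(N*β) * (t - t₀)^2)) :=
      gauss_shift_integrable (by positivity) t₀
    have igβ2 : Integrable (fun t : ℝ => Real.exp (-(N*β/2) * (t - t₀)^2)) :=
      gauss_shift_integrable (by positivity) t₀
    set G : ℝ := ∫ t in B, Real.exp (-(N * W t)) with hGdef
    have hGnn : 0 ≤ G := setIntegral_nonneg measurableSet_Ioo (fun t _ => (Real.exp_pos _).le)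
    -- upper bound on G
    have hGup : G ≤ Real.sqrt (π / (N*α)) := by
      calc G ≤ ∫ t in B, Real.exp (-(N*α) * (t - t₀)^2) := by
            apply setIntegral_mono_on ibG igα.integrableOn measurableSet_Ioo
            intro t ht
            apply Real.exp_le_exp.2
            linarith only [mul_le_mul_of_nonneg_left (hWlow t ht) hNpos.le]
      _ ≤ ∫ t : ℝ, Real.exp (-(N*α) * (t - t₀)^2) :=
            setIntegral_le_integral igα (Eventually.of_forall (fun t => (Real.exp_pos _).le))
      _ = Real.sqrt (π / (N*α)) := gauss_shift _ _
    -- lower bound on G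
    have hBclow : ∫ t in Bᶜ, Real.exp (-(N*β) * (t - t₀)^2)
        ≤ Real.exp (-(k₂ * N)) * Real.sqrt (π / (N*β/2)) := by
      have hpt : ∀ t ∈ Bᶜ, Real.exp (-(N*β) * (t - t₀)^2)
          ≤ Real.exp (-(k₂ * N)) * Real.exp (-(N*β/2) * (t - t₀)^2) := by
        intro t ht
        have hd2 : δ^2 ≤ (t - t₀)^2 := by
          rw [hBdef] at ht
          simp only [mem_compl_iff, mem_Ioo, not_and_or, not_lt] at ht
          have habs : δ ≤ |t - t₀| := by
            rcases ht with h | h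
            · exact le_abs.2 (Or.inr (by linarith only [h]))
            · exact le_abs.2 (Or.inl (by linarith only [h]))
          have := sq_le_sq' (by linarith only [habs, abs_nonneg (t - t₀), hδpos]) habs
          rwa [sq_abs] at this
        rw [← Real.exp_add]
        apply Real.exp_le_exp.2
        rw [hk₂def]
        linarith only [mul_le_mul_of_nonneg_left hd2 (by positivity : (0:ℝ) ≤ N * β / 2)]
      calc ∫ t in Bᶜ, Real.exp (-(N*β) * (t - t₀)^2)
          ≤ ∫ t in Bᶜ, Real.exp (-(k₂ * N)) * Real.exp (-(N*β/2) * (t - t₀)^2) := by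
            apply setIntegral_mono_on igβ.integrableOn (igβ2.const_mul _).integrableOn
              measurableSet_Ioo.compl hpt
      _ = Real.exp (-(k₂ * N)) * ∫ t in Bᶜ, Real.exp (-(N*β/2) * (t - t₀)^2) :=
            integral_const_mul _ _
      _ ≤ Real.exp (-(k₂ * N)) * Real.sqrt (π / (N*β/2)) := by
            apply mul_le_mul_of_nonneg_left ?_ (Real.exp_nonneg _)
            calc ∫ t in Bᶜ, Real.exp (-(N*β/2) * (t - t₀)^2)
                ≤ ∫ t : ℝ, Real.exp (-(N*β/2) * (t - t₀)^2) :=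
                  setIntegral_le_integral igβ2 (Eventually.of_forall fun t => (Real.exp_pos _).le)
            _ = Real.sqrt (π / (N*β/2)) := gauss_shift _ _
    have hGlow : Real.sqrt (π / (N*β)) - Real.exp (-(k₂ * N)) * Real.sqrt (π / (N*β/2)) ≤ G := by
      have hBmeas : MeasurableSet B := by rw [hBdef]; exact measurableSet_Ioo
      have hsplit := integral_add_compl (s := B) hBmeas igβ
        (f := fun t : ℝ => Real.exp (-(N*β) * (t - t₀)^2))
      have hmono : ∫ t in B, Real.exp (-(N*β) * (t - t₀)^2) ≤ G := by
        apply setIntegral_mono_on igβ.integrableOn ibG measurableSet_Ioo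
        intro t ht
        apply Real.exp_le_exp.2
        linarith only [mul_le_mul_of_nonneg_left (hWup t ht) hNpos.le]
      have hfull : ∫ t : ℝ, Real.exp (-(N*β) * (t - t₀)^2) = Real.sqrt (π / (N*β)) :=
        gauss_shift _ _
      have := hBclow
      linarith only [hsplit, hmono, hBclow, hfull ▸ hsplit]
    have hBmeas : MeasurableSet B := by rw [hBdef]; exact measurableSet_Ioo
    -- bound on E
    set E : ℝ := ∫ t in B, Real.exp (-(N * W t)) * (q t - q t₀) with hEdef
    have hEbd : |E| ≤ ε₂ * G := by
      have h1 : |E| ≤ ∫ t in B, |Real.exp (-(N * W t)) * (q t - q t₀)| := by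
        rw [hEdef]
        have := norm_integral_le_integral_norm
          (f := fun t => Real.exp (-(N * W t)) * (q t - q t₀)) (μ := volume.restrict B)
        simp only [Real.norm_eq_abs] at this
        exact this
      have h2 : ∫ t in B, |Real.exp (-(N * W t)) * (q t - q t₀)|
          ≤ ∫ t in B, ε₂ * Real.exp (-(N * W t)) := by
        apply setIntegral_mono_on ibEq.abs (ibG.const_mul ε₂) hBmeas
        intro t ht
        rw [abs_mul, Real.abs_exp]
        rw [mul_comm (ε₂ : ℝ)]
        exact mul_le_mul_of_nonneg_left ((hball t (hBcb ht)).2.2) (Real.exp_nonneg _)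
      have h3 : ∫ t in B, ε₂ * Real.exp (-(N * W t)) = ε₂ * G := by
        rw [hGdef, ← integral_const_mul]
      linarith only [h1, h2, h3]
    -- splitting
    have hSBmeas : MeasurableSet (S \ B) := hSmeas.diff hBmeas
    set T : ℝ := ∫ t in S \ B, Real.exp (-(N * W t)) * q t with hTdef
    have hsplitJ : ∫ t in S, Real.exp (-(N * W t)) * q t
        = (∫ t in B, Real.exp (-(N * W t)) * q t) + T := by
      rw [hTdef, ← setIntegral_union disjoint_sdiff_self_right hSBmeas ibQ
        ((hJint N hNN₀).mono_set diff_subset), Set.union_diff_cancel hBS]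
    have hBdecomp : ∫ t in B, Real.exp (-(N * W t)) * q t = q t₀ * G + E := by
      rw [hGdef, hEdef, ← integral_const_mul, ← integral_add (ibG.const_mul (q t₀)) ibEq]
      apply setIntegral_congr_fun hBmeas
      intro t _
      show Real.exp (-(N * W t)) * q t
        = q t₀ * Real.exp (-(N * W t)) + Real.exp (-(N * W t)) * (q t - q t₀)
      ring
    -- bound on T
    have habsint : IntegrableOn (fun t => Real.exp (-(N * W t)) * |q t|) S := by
      apply Integrable.mono' hbase
      · exact ((Real.continuous_exp.comp_continuousOn
          ((continuousOn_const.mul hWcont).neg)).mul hqcont.abs).aestronglyMeasurable hSmeas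
      · apply (ae_restrict_mem hSmeas).mono
        intro t ht
        have h1 : Real.exp (-(N * W t)) ≤ Real.exp (-(N₀ * W t)) := by
          apply Real.exp_le_exp.2
          linarith only [mul_le_mul_of_nonneg_right hNN₀ (hW0 t ht)]
        rw [Real.norm_eq_abs, abs_mul, Real.abs_exp, abs_abs]
        exact mul_le_mul_of_nonneg_right h1 (abs_nonneg _)
    have hTbd : |T| ≤ Real.exp (N₀ * c₀) * C' * Real.exp (-(c₀ * N)) := by
      have h1 : |T| ≤ ∫ t in S \ B, Real.exp (-(N * W t)) * |q t| := by
        rw [hTdef]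
        have := norm_integral_le_integral_norm
          (f := fun t => Real.exp (-(N * W t)) * q t) (μ := volume.restrict (S \ B))
        simp only [Real.norm_eq_abs] at this
        refine this.trans (le_of_eq ?_)
        apply setIntegral_congr_fun hSBmeas
        intro t _
        show |Real.exp (-(N * W t)) * q t| = Real.exp (-(N * W t)) * |q t|
        rw [abs_mul, Real.abs_exp]
      have h2 : ∫ t in S \ B, Real.exp (-(N * W t)) * |q t|
          ≤ ∫ t in S \ B, (Real.exp (N₀ * c₀) * Real.exp (-(c₀ * N)))
              * (Real.exp (-(N₀ * W t)) * |q t|) := by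
        apply setIntegral_mono_on (habsint.mono_set diff_subset)
          ((hbase.mono_set diff_subset).const_mul _) hSBmeas
        intro t ht
        have hWc := hWtail t ht
        rw [← mul_assoc, mul_assoc (Real.exp (N₀ * c₀)), ← Real.exp_add, ← Real.exp_add]
        apply mul_le_mul_of_nonneg_right ?_ (abs_nonneg _)
        apply Real.exp_le_exp.2
        linarith only [mul_nonneg (sub_nonneg.2 hNN₀) (sub_nonneg.2 hWc)]
      have h3 : ∫ t in S \ B, (Real.exp (N₀ * c₀) * Real.exp (-(c₀ * N)))
            * (Real.exp (-(N₀ * W t)) * |q t|)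
          = (Real.exp (N₀ * c₀) * Real.exp (-(c₀ * N)))
            * ∫ t in S \ B, Real.exp (-(N₀ * W t)) * |q t| := integral_const_mul _ _
      have h4 : ∫ t in S \ B, Real.exp (-(N₀ * W t)) * |q t| ≤ C' := by
        rw [hC'def]
        exact setIntegral_mono_set hbase
          (Eventually.of_forall fun t => by positivity) diff_subset.eventuallyLE
      have h5 : (0:ℝ) ≤ Real.exp (N₀ * c₀) * Real.exp (-(c₀ * N)) := by positivity
      calc |T| ≤ (Real.exp (N₀ * c₀) * Real.exp (-(c₀ * N)))
            * ∫ t in S \ B, Real.exp (-(N₀ * W t)) * |q t| := by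
            rw [← h3]; linarith only [h1, h2]
      _ ≤ (Real.exp (N₀ * c₀) * Real.exp (-(c₀ * N))) * C' :=
            mul_le_mul_of_nonneg_left h4 h5
      _ = Real.exp (N₀ * c₀) * C' * Real.exp (-(c₀ * N)) := by ring
    -- scale by √N
    have hG1 : Real.sqrt N * G ≤ Real.sqrt (π / α) := by
      have he : Real.sqrt N * Real.sqrt (π / (N*α)) = Real.sqrt (π / α) := by
        rw [← Real.sqrt_mul hNpos.le]
        congr 1
        field_simp
      calc Real.sqrt N * G ≤ Real.sqrt N * Real.sqrt (π / (N*α)) :=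
            mul_le_mul_of_nonneg_left hGup (Real.sqrt_nonneg _)
      _ = _ := he
    have hG2 : Real.sqrt (π / β) - Real.exp (-(k₂*N)) * Real.sqrt (π / (β/2))
        ≤ Real.sqrt N * G := by
      have he1 : Real.sqrt N * Real.sqrt (π / (N*β)) = Real.sqrt (π / β) := by
        rw [← Real.sqrt_mul hNpos.le]
        congr 1
        field_simp
      have he2 : Real.sqrt N * Real.sqrt (π / (N*β/2)) = Real.sqrt (π / (β/2)) := by
        rw [← Real.sqrt_mul hNpos.le]
        congr 1
        field_simp
      have hmul := mul_le_mul_of_nonneg_left hGlow (Real.sqrt_nonneg N)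
      have hre : Real.sqrt N * (Real.sqrt (π / (N*β))
            - Real.exp (-(k₂ * N)) * Real.sqrt (π / (N*β/2)))
          = Real.sqrt N * Real.sqrt (π / (N*β))
            - Real.exp (-(k₂ * N)) * (Real.sqrt N * Real.sqrt (π / (N*β/2))) := by ring
      rw [hre, he1, he2] at hmul
      exact hmul
    have hE2nn : (0:ℝ) ≤ Real.exp (-(k₂*N)) * Real.sqrt (π/(β/2)) := by positivity
    have habsG : |Real.sqrt N * G - Real.sqrt (π / A)|
        ≤ ε/(6*M) + Real.exp (-(k₂*N)) * Real.sqrt (π/(β/2)) := by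
      rw [abs_le]
      obtain ⟨hφ1, hφ2⟩ := abs_le.1 hφ
      obtain ⟨hψ1, hψ2⟩ := abs_le.1 hψ
      constructor
      · linarith only [hG2, hψ1, hψ2, hE2nn]
      · linarith only [hG1, hφ1, hφ2, hE2nn]
    -- final estimate
    have hmain : Real.sqrt N * (∫ t in S, Real.exp (-(N * W t)) * q t)
          - q t₀ * Real.sqrt (π / A)
        = q t₀ * (Real.sqrt N * G - Real.sqrt (π / A)) + Real.sqrt N * E + Real.sqrt N * T := by
      rw [hsplitJ, hBdecomp]; ring
    rw [hmain]
    have habs3 : |q t₀ * (Real.sqrt N * G - Real.sqrt (π / A)) + Real.sqrt N * E + Real.sqrt N * T|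
        ≤ |q t₀| * |Real.sqrt N * G - Real.sqrt (π / A)| + Real.sqrt N * |E|
          + Real.sqrt N * |T| := by
      calc |q t₀ * (Real.sqrt N * G - Real.sqrt (π / A)) + Real.sqrt N * E + Real.sqrt N * T|
          ≤ |q t₀ * (Real.sqrt N * G - Real.sqrt (π / A)) + Real.sqrt N * E|
            + |Real.sqrt N * T| := abs_add_le _ _
      _ ≤ |q t₀ * (Real.sqrt N * G - Real.sqrt (π / A))| + |Real.sqrt N * E|
            + |Real.sqrt N * T| := add_le_add (abs_add_le _ _) le_rfl
      _ = |q t₀| * |Real.sqrt N * G - Real.sqrt (π / A)| + Real.sqrt N * |E|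
            + Real.sqrt N * |T| := by
            rw [abs_mul, abs_mul, abs_mul, abs_of_nonneg (Real.sqrt_nonneg N)]
    have hterm1 : |q t₀| * |Real.sqrt N * G - Real.sqrt (π / A)|
        ≤ ε/6 + M * (Real.exp (-(k₂*N)) * Real.sqrt (π/(β/2))) := by
      have := mul_le_mul hqM habsG (abs_nonneg _) hM.le
      have hMe : M * (ε/(6*M)) = ε/6 := by field_simp
      have hexp : M * (ε/(6*M) + Real.exp (-(k₂*N)) * Real.sqrt (π/(β/2)))
          = M * (ε/(6*M)) + M * (Real.exp (-(k₂*N)) * Real.sqrt (π/(β/2))) := by ring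
      linarith only [this, hMe, hexp]
    have hterm2 : Real.sqrt N * |E| ≤ ε/6 := by
      have h1 : Real.sqrt N * |E| ≤ Real.sqrt N * (ε₂ * G) :=
        mul_le_mul_of_nonneg_left hEbd (Real.sqrt_nonneg _)
      have h2 : Real.sqrt N * (ε₂ * G) = ε₂ * (Real.sqrt N * G) := by ring
      have h3 : ε₂ * (Real.sqrt N * G) ≤ ε₂ * Real.sqrt (π / α) :=
        mul_le_mul_of_nonneg_left hG1 hε₂pos.le
      have h4 : ε₂ * Real.sqrt (π / α) ≤ ε₂ * K :=
        mul_le_mul_of_nonneg_left hαK hε₂pos.le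
      linarith only [h1, h2, h3, h4, hε₂K]
    have hterm3 : Real.sqrt N * |T| ≤ ε/3 := by
      have h1 : Real.sqrt N * |T|
          ≤ Real.sqrt N * (Real.exp (N₀ * c₀) * C' * Real.exp (-(c₀ * N))) :=
        mul_le_mul_of_nonneg_left hTbd (Real.sqrt_nonneg _)
      have h2 : Real.sqrt N * (Real.exp (N₀ * c₀) * C' * Real.exp (-(c₀ * N)))
          = Real.exp (N₀ * c₀) * C' * (Real.sqrt N * Real.exp (-(c₀ * N))) := by ring
      linarith only [h1, h2, hevT]
    have hevE' : M * (Real.exp (-(k₂*N)) * Real.sqrt (π/(β/2))) ≤ ε/3 := by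
      have : M * (Real.exp (-(k₂*N)) * Real.sqrt (π/(β/2)))
          = M * (Real.sqrt (π / (β/2)) * Real.exp (-(k₂ * N))) := by ring
      linarith only [this, hevE]
    linarith only [habs3, hterm1, hterm2, hterm3, hevE']
  -- conclusion
  have hsqrtA : 0 < Real.sqrt (π / A) := Real.sqrt_pos.2 (by positivity)
  have hL : q t₀ * Real.sqrt (π / A) ≠ 0 := mul_ne_zero hq hsqrtA.ne'
  have h2 : Tendsto (fun N : ℝ =>
      (Real.sqrt N * ∫ t in S, Real.exp (-(N * W t)) * q t) * (q t₀ * Real.sqrt (π / A))⁻¹)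
      atTop (𝓝 1) := by
    have := key.mul (tendsto_const_nhds (x := (q t₀ * Real.sqrt (π / A))⁻¹))
    rwa [mul_inv_cancel₀ hL] at this
  apply h2.congr'
  filter_upwards [eventually_gt_atTop (0:ℝ)] with N hN
  have hNs : Real.sqrt N ≠ 0 := (Real.sqrt_pos.2 hN).ne'
  have hnum : (∫ t in S, Real.exp (-N * V t) * q t)
      = Real.exp (-N * V t₀) * ∫ t in S, Real.exp (-(N * W t)) * q t := by
    rw [← integral_const_mul]
    apply setIntegral_congr_fun hSmeas
    intro t _
    show Real.exp (-N * V t) * q t = Real.exp (-N * V t₀) * (Real.exp (-(N * W t)) * q t)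
    rw [← mul_assoc, ← Real.exp_add]
    simp only [hWdef]
    ring_nf
  have hden : Real.sqrt (2 * π / (N * c)) = Real.sqrt (π / A) / Real.sqrt N := by
    have h3 : 2 * π / (N * c) = (π / A) / N := by
      rw [hAdef]; field_simp
    rw [h3, Real.sqrt_div (by positivity) N]
  rw [hnum, hden]
  have hexp : Real.exp (-N * V t₀) ≠ 0 := (Real.exp_pos _).ne'
  field_simp
end

section
/- Let G, H : ℝ² → ℝ with G differentiable, and suppose that for all (x,y) ∈ ℝ², ∂G/∂x(x,y) = 2x·H(x,y) and ∂G/∂y(x,y) = 2y·H(x,y). Then there exists a function f : [0,∞) → ℝ such that G(x,y) = f(x² + y²) for all (x,y) ∈ ℝ²; equivalently, G(x,y) depends only on x² + y². -/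
theorem stmt12 (G H : ℝ × ℝ → ℝ) (hG : Differentiable ℝ G)
    (hx : ∀ x y : ℝ, fderiv ℝ G (x, y) (1, 0) = 2 * x * H (x, y))
    (hy : ∀ x y : ℝ, fderiv ℝ G (x, y) (0, 1) = 2 * y * H (x, y)) :
    ∃ f : ℝ → ℝ, ∀ x y : ℝ, G (x, y) = f (x ^ 2 + y ^ 2) := by
  have key : ∀ r θ : ℝ, G (r * Real.cos θ, r * Real.sin θ) = G (r, 0) := by
    intro r θ
    set g : ℝ → ℝ := fun t => G (r * Real.cos t, r * Real.sin t) with hg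
    have hgd : ∀ t : ℝ, HasDerivAt g 0 t := by
      intro t
      have hc : HasDerivAt (fun t : ℝ => (r * Real.cos t, r * Real.sin t))
          (-(r * Real.sin t), r * Real.cos t) t := by
        have := ((Real.hasDerivAt_cos t).const_mul r).prodMk
          ((Real.hasDerivAt_sin t).const_mul r)
        simpa [mul_comm, mul_neg, neg_mul] using this
      have := (hG (r * Real.cos t, r * Real.sin t)).hasFDerivAt.comp_hasDerivAt t hc
      have hval : fderiv ℝ G (r * Real.cos t, r * Real.sin t)
          (-(r * Real.sin t), r * Real.cos t) = 0 := by
        have hdecomp : ((-(r * Real.sin t), r * Real.cos t) : ℝ × ℝ)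
            = (-(r * Real.sin t)) • ((1 : ℝ), (0 : ℝ)) + (r * Real.cos t) • ((0 : ℝ), (1 : ℝ)) := by
          simp [Prod.ext_iff]
        rw [hdecomp, map_add, map_smul, map_smul, hx, hy]
        simp only [smul_eq_mul]
        ring
      rwa [hval] at this
    have hdiff : Differentiable ℝ g := fun t => (hgd t).differentiableAt
    have hderiv : ∀ t, deriv g t = 0 := fun t => (hgd t).deriv
    have := is_const_of_deriv_eq_zero hdiff hderiv θ 0
    simpa [g] using this
  refine ⟨fun s => G (Real.sqrt s, 0), ?_⟩
  intro x y
  rcases eq_or_ne (x, y) ((0 : ℝ), (0 : ℝ)) with h0 | h0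
  · obtain ⟨hx0, hy0⟩ := Prod.mk.injEq .. ▸ h0
    subst hx0; subst hy0
    simp
  · set z : ℂ := ⟨x, y⟩ with hz
    have hzne : z ≠ 0 := by
      intro hc
      apply h0
      rw [Complex.ext_iff] at hc
      simp only [hz, Complex.zero_re, Complex.zero_im] at hc
      simp [Prod.ext_iff, hc.1, hc.2]
    have habs : ‖z‖ = Real.sqrt (x ^ 2 + y ^ 2) := by
      rw [Complex.norm_def, Complex.normSq_apply]
      norm_num [hz, sq]
    have hxr : ‖z‖ * Real.cos z.arg = x := Complex.norm_mul_cos_arg z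
    have hyr : ‖z‖ * Real.sin z.arg = y := Complex.norm_mul_sin_arg z
    have := key ‖z‖ z.arg
    rw [hxr, hyr, habs] at this
    exact this
end

section
/- For s ∈ [0,1] let f_s : [0,∞) → ℝ be smooth in t, and suppose there exist s₀, δ₀ > 0 such that (s,t) ↦ f_s(t), (s,t) ↦ f_s′(t), and (s,t) ↦ f_s″(t) are jointly continuous and bounded on [0,s₀]×[0,δ₀] (primes denote t-derivatives). Assume f₀(0) = 0, f₀′(0) = 0, f₀″(0) > 0, and f_s(0) < 0 for s > 0. Then there exist δ > 0, C > 0, and s₁ > 0 such that for every s ∈ (0,s₁] the function f_s has a unique zero t₀(s) in [0,δ], and t₀(s) ≤ C·(|f_s(0)|^{1/2} + |f_s′(0)|). -/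
open MeasureTheory Filter Set Topology


private lemma stmt15_aux (q t a b : ℝ) (hq : 0 < q) (ht0 : 0 ≤ t) (ha : 0 ≤ a) (hb : 0 ≤ b)
    (hqt : q * t^2 ≤ a + b * t) :
    t ≤ (1 / Real.sqrt q + 1 / q) * (Real.sqrt a + b) := by
  set sa : ℝ := Real.sqrt a with hsadef
  set sq : ℝ := Real.sqrt q with hsqdef
  have hsa : 0 ≤ sa := Real.sqrt_nonneg _
  have hsqq : 0 < sq := Real.sqrt_pos.mpr hq
  have hsa2 : sa^2 = a := Real.sq_sqrt ha
  have hsq2 : sq^2 = q := Real.sq_sqrt hq.le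
  have hmain : q * t ≤ sa * sq + b := by
    by_contra hcon
    push_neg at hcon
    have hqtpos : 0 < q * t := lt_of_le_of_lt (add_nonneg (mul_nonneg hsa hsqq.le) hb) hcon
    have ht0' : 0 < t := by nlinarith
    have e1 : sa * sq < sq^2 * t := by rw [hsq2]; linarith
    have e2 : sa < sq * t := lt_of_mul_lt_mul_left (by linarith [e1] : sq * sa < sq * (sq * t)) hsqq.le
    have e3 : sa * sa ≤ sa * (sq * t) := mul_le_mul_of_nonneg_left e2.le hsa
    have e4 : (sa * sq + b) * t < (q * t) * t := mul_lt_mul_of_pos_right hcon ht0'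
    have hsa2' : sa * sa = a := by nlinarith [hsa2]
    nlinarith [e3, e4, hqt, hsa2']
  have h1 : t ≤ sa / sq + b / q := by
    rw [div_add_div _ _ (ne_of_gt hsqq) (ne_of_gt hq), le_div_iff₀ (by positivity)]
    calc t * (sq * q) = (q * t) * sq := by ring
      _ ≤ (sa * sq + b) * sq := by nlinarith
      _ = sa * q + b * sq := by rw [← hsq2]; ring
      _ = sa * q + sq * b := by ring
  calc t ≤ sa / sq + b / q := h1
    _ = (1 / sq) * sa + (1 / q) * b := by ring
    _ ≤ (1 / sq + 1 / q) * (sa + b) := by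
        have h1 : 0 ≤ (1/q) * sa := by positivity
        have h2 : 0 ≤ (1/sq) * b := by positivity
        nlinarith

set_option maxHeartbeats 1000000 in
theorem stmt15 (f : ℝ → ℝ → ℝ) (s₀ δ₀ : ℝ) (hs₀ : 0 < s₀) (hδ₀ : 0 < δ₀)
    -- each f_s is smooth on [0, ∞)
    (hsmooth : ∀ s ∈ Set.Icc (0 : ℝ) 1, ContDiffOn ℝ (⊤ : ℕ∞) (f s) (Set.Ici 0))
    -- joint continuity of f, f', f'' on [0,s₀] × [0,δ₀]
    (hcont : ContinuousOn (fun x : ℝ × ℝ => f x.1 x.2) (Set.Icc 0 s₀ ×ˢ Set.Icc 0 δ₀))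
    (hcont' : ContinuousOn
      (fun x : ℝ × ℝ => derivWithin (f x.1) (Set.Ici 0) x.2)
      (Set.Icc 0 s₀ ×ˢ Set.Icc 0 δ₀))
    (hcont'' : ContinuousOn
      (fun x : ℝ × ℝ => derivWithin (derivWithin (f x.1) (Set.Ici 0)) (Set.Ici 0) x.2)
      (Set.Icc 0 s₀ ×ˢ Set.Icc 0 δ₀))
    -- boundedness of f, f', f'' on [0,s₀] × [0,δ₀]
    (hbdd : ∃ B : ℝ, ∀ x ∈ Set.Icc (0 : ℝ) s₀ ×ˢ Set.Icc (0 : ℝ) δ₀,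
      |f x.1 x.2| ≤ B ∧
      |derivWithin (f x.1) (Set.Ici 0) x.2| ≤ B ∧
      |derivWithin (derivWithin (f x.1) (Set.Ici 0)) (Set.Ici 0) x.2| ≤ B)
    -- f₀(0) = 0, f₀'(0) = 0, f₀''(0) > 0, and f_s(0) < 0 for s > 0
    (h00 : f 0 0 = 0)
    (h0' : derivWithin (f 0) (Set.Ici 0) 0 = 0)
    (h0'' : 0 < derivWithin (derivWithin (f 0) (Set.Ici 0)) (Set.Ici 0) 0)
    (hneg : ∀ s : ℝ, 0 < s → s ≤ 1 → f s 0 < 0) :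
    ∃ δ > (0 : ℝ), ∃ C > (0 : ℝ), ∃ s₁ > (0 : ℝ), ∀ s : ℝ, 0 < s → s ≤ s₁ →
      (∃! t : ℝ, t ∈ Set.Icc 0 δ ∧ f s t = 0) ∧
      ∀ t ∈ Set.Icc (0 : ℝ) δ, f s t = 0 →
        t ≤ C * (Real.sqrt |f s 0| + |derivWithin (f s) (Set.Ici 0) 0|) := by
  classical
  have h00mem : ((0:ℝ),(0:ℝ)) ∈ Set.Icc (0:ℝ) s₀ ×ˢ Set.Icc (0:ℝ) δ₀ :=
    ⟨⟨le_rfl, hs₀.le⟩, ⟨le_rfl, hδ₀.le⟩⟩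
  set K := derivWithin (derivWithin (f 0) (Set.Ici 0)) (Set.Ici 0) 0 with hKdef
  have hK : 0 < K := h0''
  -- helper: extract rectangles of near-constancy from continuity at (0,0)
  have key : ∀ F : ℝ × ℝ → ℝ, ContinuousOn F (Set.Icc 0 s₀ ×ˢ Set.Icc 0 δ₀) →
      ∀ ε : ℝ, 0 < ε → ∃ r > (0:ℝ), ∀ s t : ℝ, 0 ≤ s → s ≤ s₀ → 0 ≤ t → t ≤ δ₀ →
        s < r → t < r → |F (s, t) - F (0, 0)| < ε := by
    intro F hF ε hε
    have h1 : ContinuousWithinAt F (Set.Icc 0 s₀ ×ˢ Set.Icc 0 δ₀) (0,0) := hF _ h00mem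
    have h2 : {x : ℝ × ℝ | |F x - F (0,0)| < ε} ∈
        𝓝[Set.Icc (0:ℝ) s₀ ×ˢ Set.Icc (0:ℝ) δ₀] ((0:ℝ),(0:ℝ)) := by
      have := Metric.tendsto_nhds.mp h1 ε hε
      filter_upwards [this] with x hx
      simpa [Real.dist_eq] using hx
    obtain ⟨r, hr, hsub⟩ := Metric.mem_nhdsWithin_iff.mp h2
    refine ⟨r, hr, fun s t hs hss ht htt hsr htr => ?_⟩
    have hmem : ((s, t) : ℝ × ℝ) ∈ Metric.ball ((0:ℝ),(0:ℝ)) r ∩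
        (Set.Icc (0:ℝ) s₀ ×ˢ Set.Icc (0:ℝ) δ₀) := by
      refine ⟨?_, ⟨⟨hs, hss⟩, ⟨ht, htt⟩⟩⟩
      rw [Metric.mem_ball, Prod.dist_eq]
      simp only [Real.dist_eq, sub_zero]
      rw [abs_of_nonneg hs, abs_of_nonneg ht]
      exact max_lt hsr htr
    exact hsub hmem
  -- rectangle where the second derivative is ≥ K/2
  obtain ⟨r₂, hr₂, hF2⟩ := key _ hcont'' (K/2) (by linarith)
  set δ : ℝ := min δ₀ (r₂/2) with hδdef
  have hδpos : 0 < δ := lt_min hδ₀ (by linarith)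
  have hδleδ₀ : δ ≤ δ₀ := min_le_left _ _
  have hδltr₂ : δ < r₂ := lt_of_le_of_lt (min_le_right _ _) (by linarith)
  set q : ℝ := K/4 with hqdef
  have hq : 0 < q := by positivity
  set εv : ℝ := (q * δ^2 / 2) / (1 + δ) with hεvdef
  have hεv : 0 < εv := by positivity
  obtain ⟨r₀, hr₀, hF0⟩ := key _ hcont εv hεv
  obtain ⟨r₁, hr₁, hF1⟩ := key _ hcont' εv hεv
  set s₁ : ℝ := min (min s₀ 1) (min (r₂/2) (min (r₀/2) (r₁/2))) with hs₁def
  have hs₁pos : 0 < s₁ := by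
    refine lt_min (lt_min hs₀ one_pos) (lt_min (by linarith) (lt_min (by linarith) (by linarith)))
  set C : ℝ := 1 / Real.sqrt q + 1 / q with hCdef
  have hsqq : 0 < Real.sqrt q := Real.sqrt_pos.mpr hq
  have hC : 0 < C := by positivity
  refine ⟨δ, hδpos, C, hC, s₁, hs₁pos, fun s hs hss₁ => ?_⟩
  -- basic bounds on s
  have hss₀ : s ≤ s₀ := le_trans hss₁ (le_trans (min_le_left _ _) (min_le_left _ _))
  have hs1 : s ≤ 1 := le_trans hss₁ (le_trans (min_le_left _ _) (min_le_right _ _))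
  have hsr₂ : s < r₂ := lt_of_le_of_lt (le_trans hss₁
    (le_trans (min_le_right _ _) (min_le_left _ _))) (by linarith)
  have hsr₀ : s < r₀ := lt_of_le_of_lt (le_trans hss₁ (le_trans (min_le_right _ _)
    (le_trans (min_le_right _ _) (min_le_left _ _)))) (by linarith)
  have hsr₁ : s < r₁ := lt_of_le_of_lt (le_trans hss₁ (le_trans (min_le_right _ _)
    (le_trans (min_le_right _ _) (min_le_right _ _)))) (by linarith)
  set g : ℝ → ℝ := f s with hgdef
  set g1 : ℝ → ℝ := derivWithin g (Set.Ici 0) with hg1def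
  set g2 : ℝ → ℝ := derivWithin g1 (Set.Ici 0) with hg2def
  have hgsm : ContDiffOn ℝ (⊤ : ℕ∞) g (Set.Ici 0) := hsmooth s ⟨hs.le, hs1⟩
  have hg1sm : ContDiffOn ℝ (⊤ : ℕ∞) g1 (Set.Ici 0) :=
    hgsm.derivWithin (uniqueDiffOn_Ici 0) (by simp)
  have hIcc : Set.Icc (0:ℝ) δ ⊆ Set.Ici 0 := Set.Icc_subset_Ici_self
  have hgc : ContinuousOn g (Set.Icc 0 δ) := (hgsm.continuousOn).mono hIcc
  have hg1c : ContinuousOn g1 (Set.Icc 0 δ) := (hg1sm.continuousOn).mono hIcc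
  -- derivatives at interior points
  have hgD : ∀ t : ℝ, 0 < t → HasDerivAt g (g1 t) t := by
    intro t ht
    have h := ((hgsm.differentiableOn (by simp)) t (le_of_lt ht)).differentiableAt
      (Ici_mem_nhds ht)
    have := h.hasDerivAt
    rwa [← derivWithin_of_mem_nhds (Ici_mem_nhds ht)] at this
  have hg1D : ∀ t : ℝ, 0 < t → HasDerivAt g1 (g2 t) t := by
    intro t ht
    have h := ((hg1sm.differentiableOn (by simp)) t (le_of_lt ht)).differentiableAt
      (Ici_mem_nhds ht)
    have := h.hasDerivAt
    rwa [← derivWithin_of_mem_nhds (Ici_mem_nhds ht)] at this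
  -- second derivative lower bound on the rectangle
  have hg2lb : ∀ t ∈ Set.Icc (0:ℝ) δ, K/2 < g2 t := by
    intro t ht
    have := hF2 s t hs.le hss₀ ht.1 (le_trans ht.2 hδleδ₀) hsr₂ (lt_of_le_of_lt ht.2 hδltr₂)
    have habs := abs_sub_lt_iff.mp this
    simp only [hg2def, hg1def, hgdef, ← hKdef] at habs ⊢
    linarith [habs.2]
  have hintD : interior (Set.Icc (0:ℝ) δ) = Set.Ioo 0 δ := interior_Icc
  -- g1 t ≥ g1 0 + (K/2) t on [0, δ]
  have hmono1 : ∀ t ∈ Set.Icc (0:ℝ) δ, g1 0 + K/2 * t ≤ g1 t := by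
    have hφ : MonotoneOn (fun t => g1 t - K/2 * t) (Set.Icc 0 δ) := by
      apply monotoneOn_of_deriv_nonneg (convex_Icc 0 δ)
      · exact hg1c.sub ((continuous_const.mul continuous_id).continuousOn)
      · rw [hintD]
        intro t ht
        exact ((hg1D t ht.1).sub ((hasDerivAt_id t).const_mul (K/2))).differentiableAt.differentiableWithinAt
      · rw [hintD]
        intro t ht
        have h : HasDerivAt (fun t => g1 t - K/2 * t) (g2 t - K/2 * 1) t :=
          (hg1D t ht.1).sub ((hasDerivAt_id t).const_mul (K/2))
        rw [h.deriv]
        have := hg2lb t ⟨ht.1.le, ht.2.le⟩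
        linarith
    intro t ht
    have := hφ ⟨le_rfl, hδpos.le⟩ ht ht.1
    simp only [mul_zero, sub_zero] at this
    linarith
  -- g t ≥ g 0 + g1 0 t + q t² on [0, δ]
  have hlow : ∀ t ∈ Set.Icc (0:ℝ) δ, g 0 + g1 0 * t + q * t^2 ≤ g t := by
    have hψ : MonotoneOn (fun t => g t - g1 0 * t - q * t^2) (Set.Icc 0 δ) := by
      apply monotoneOn_of_deriv_nonneg (convex_Icc 0 δ)
      · exact (hgc.sub ((continuous_const.mul continuous_id).continuousOn)).sub
          ((continuous_const.mul (continuous_pow 2)).continuousOn)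
      · rw [hintD]
        intro t ht
        exact (((hgD t ht.1).sub ((hasDerivAt_id t).const_mul (g1 0))).sub
          ((hasDerivAt_pow 2 t).const_mul q)).differentiableAt.differentiableWithinAt
      · rw [hintD]
        intro t ht
        have h : HasDerivAt (fun t => g t - g1 0 * t - q * t^2)
            (g1 t - g1 0 * 1 - q * (2 * t^1)) t :=
          ((hgD t ht.1).sub ((hasDerivAt_id t).const_mul (g1 0))).sub
            ((hasDerivAt_pow 2 t).const_mul q)
        rw [h.deriv]
        have := hmono1 t ⟨ht.1.le, ht.2.le⟩
        simp only [hqdef]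
        nlinarith
    intro t ht
    have := hψ ⟨le_rfl, hδpos.le⟩ ht ht.1
    simp only [mul_zero, sub_zero] at this
    nlinarith
  -- strict convexity of g on [0, δ]
  have hconv : StrictConvexOn ℝ (Set.Icc (0:ℝ) δ) g := by
    apply strictConvexOn_of_deriv2_pos (convex_Icc 0 δ) hgc
    rw [hintD]
    intro t ht
    have heq : deriv g =ᶠ[𝓝 t] g1 :=
      eventually_of_mem (Ioi_mem_nhds ht.1) (fun y hy => ((hgD y hy).deriv))
    show 0 < deriv^[2] g t
    have : deriv^[2] g t = deriv (deriv g) t := by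
      simp [Function.iterate_succ, Function.iterate_zero, Function.comp]
    rw [this, heq.deriv_eq, (hg1D t ht.1).deriv]
    linarith [hg2lb t ⟨ht.1.le, ht.2.le⟩]
  -- smallness of g 0 and g1 0
  have hg0small : |g 0| < εv := by
    have := hF0 s 0 hs.le hss₀ le_rfl hδ₀.le hsr₀ hr₀
    simpa [h00, hgdef] using this
  have hg10small : |g1 0| < εv := by
    have := hF1 s 0 hs.le hss₀ le_rfl hδ₀.le hsr₁ hr₁
    simpa [h0', hg1def, hgdef] using this
  have hg0neg : g 0 < 0 := hneg s hs hs1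
  -- g δ > 0
  have hgδpos : 0 < g δ := by
    have hl := hlow δ ⟨hδpos.le, le_rfl⟩
    have h1 := abs_lt.mp hg0small
    have h2 := abs_lt.mp hg10small
    have hδεv : εv + εv * δ = q * δ^2 / 2 := by
      rw [hεvdef, ← mul_one_add, div_mul_cancel₀ _ (ne_of_gt (by linarith))]
    have h3 : -εv * δ < g1 0 * δ := mul_lt_mul_of_pos_right h2.1 hδpos
    have h4 : 0 < q * δ^2 / 2 := by positivity
    linarith
  -- existence of a zero
  have hiv : (0:ℝ) ∈ g '' Set.Icc 0 δ := by
    apply intermediate_value_Icc hδpos.le hgc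
    exact ⟨hg0neg.le, hgδpos.le⟩
  obtain ⟨t₀, ht₀mem, ht₀⟩ := hiv
  -- uniqueness
  have huniq : ∀ a b : ℝ, a ∈ Set.Icc (0:ℝ) δ → g a = 0 → b ∈ Set.Icc (0:ℝ) δ → g b = 0 →
      a < b → False := by
    intro a b ha hga hb hgb hab
    have ha0 : 0 < a := by
      rcases lt_or_eq_of_le ha.1 with h | h
      · exact h
      · exfalso; rw [← h] at hga; exact absurd hga hg0neg.ne
    have hb0 : 0 < b := lt_trans ha0 hab
    have hw1 : (0:ℝ) < a/b := by positivity
    have hw2 : (0:ℝ) < 1 - a/b := by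
      rw [sub_pos, div_lt_one hb0]; exact hab
    have hw3 : (1 - a/b) + a/b = 1 := by ring
    have hx0 : (0:ℝ) ∈ Set.Icc (0:ℝ) δ := ⟨le_rfl, hδpos.le⟩
    have hxy : (0:ℝ) ≠ b := ne_of_lt hb0
    have hkey := hconv.2 hx0 hb hxy hw2 hw1 hw3
    have hcomb : (1 - a/b) • (0:ℝ) + (a/b) • b = a := by
      rw [smul_eq_mul, smul_eq_mul, mul_zero, zero_add, div_mul_cancel₀ _ hb0.ne']
    rw [hcomb] at hkey
    rw [hga, hgb] at hkey
    simp only [smul_eq_mul, mul_zero, add_zero] at hkey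
    have hneg' : (1 - a/b) * g 0 < 0 := mul_neg_of_pos_of_neg hw2 hg0neg
    linarith
  constructor
  · refine ⟨t₀, ⟨ht₀mem, ht₀⟩, ?_⟩
    rintro t ⟨htmem, ht⟩
    by_contra hne
    rcases lt_or_gt_of_ne hne with h | h
    · exact huniq t t₀ htmem ht ht₀mem ht₀ h
    · exact huniq t₀ t ht₀mem ht₀ htmem ht h
  -- the bound
  · intro t htmem htz
    have hl := hlow t htmem
    rw [htz] at hl
    set a : ℝ := |g 0| with hadef
    set b : ℝ := |g1 0| with hbdef
    have ha : 0 ≤ a := abs_nonneg _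
    have hb : 0 ≤ b := abs_nonneg _
    have ht0 : 0 ≤ t := htmem.1
    have hqt : q * t^2 ≤ a + b * t := by
      have h1 : -g 0 ≤ a := neg_le_abs _
      have h2 : -(g1 0) ≤ b := neg_le_abs _
      have h3 : -(g1 0) * t ≤ b * t := mul_le_mul_of_nonneg_right h2 ht0
      linarith only [hl, h1, h3]
    have := stmt15_aux q t a b hq ht0 ha hb hqt
    calc t ≤ (1 / Real.sqrt q + 1 / q) * (Real.sqrt a + b) := this
      _ = C * (Real.sqrt a + b) := by rw [hCdef]
end

section
/- Suppose ν : I → ℝ is twice differentiable on an open interval I ⊆ ℝ and M₀(g, ν(g)) = 1 for all g ∈ I. If g* ∈ I is a point at which M₁(g*, ν(g*)) = 1, then ν″(g*) = M₄ − 2M₃M₂ + M₂³, where all moments on the right-hand side are evaluated at (g*, ν(g*)). -/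
open MeasureTheory Filter Set Topology

/-- The moments `M_i(g,ν) = ∫₀^∞ t^i e^{-t³ - g t² - (ν+1) t} dt`
of the interaction `p(t) = e^{-t³ - g t² - ν t}`. -/
noncomputable def momentGN (i : ℕ) (g ν : ℝ) : ℝ :=
  ∫ t in Set.Ioi (0 : ℝ), t ^ i * Real.exp (-t ^ 3 - g * t ^ 2 - (ν + 1) * t)

lemma cubic_bound (A D : ℝ) : ∃ C, ∀ t ≥ (0:ℝ), -t^3 + A*t^2 + D*t ≤ C := by
  refine ⟨2*(|A|+|D|+1)^3, fun t ht => ?_⟩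
  set S := |A|+|D|+1 with hS
  have hA : A ≤ |A| := le_abs_self A
  have hD : D ≤ |D| := le_abs_self D
  have hA0 : 0 ≤ |A| := abs_nonneg A
  have hD0 : 0 ≤ |D| := abs_nonneg D
  rcases le_total t S with h | h
  · nlinarith [sq_nonneg t, sq_nonneg (S - t), pow_le_pow_left₀ ht h 3, sq_nonneg S]
  · nlinarith [sq_nonneg t, mul_nonneg ht ht, pow_pos (show (0:ℝ) < S by positivity) 3]

lemma integrable_pow_exp_cubic (k : ℕ) (A B : ℝ) :
    IntegrableOn (fun t : ℝ => t^k * Real.exp (-t^3 + A*t^2 + B*t)) (Set.Ioi 0) := by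
  obtain ⟨C, hC⟩ := cubic_bound A (B + k + 1)
  have hint : IntegrableOn (fun t : ℝ => Real.exp C * Real.exp (-1 * t)) (Set.Ioi 0) :=
    (exp_neg_integrableOn_Ioi 0 one_pos).const_mul _
  refine hint.mono' ?_ ?_
  · exact (Continuous.mul (continuous_pow k)
      (Real.continuous_exp.comp (by continuity))).aestronglyMeasurable
  · rw [ae_restrict_iff' measurableSet_Ioi]
    filter_upwards with t ht
    have ht0 : (0:ℝ) ≤ t := le_of_lt ht
    have h1 : t ^ k ≤ Real.exp (k * t) := by
      have := pow_le_pow_left₀ ht0 (by linarith [Real.add_one_le_exp t] : t ≤ Real.exp t) k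
      rwa [← Real.exp_nat_mul] at this
    have h2 : t ^ k * Real.exp (-t^3 + A*t^2 + B*t) ≤ Real.exp C * Real.exp (-1 * t) := by
      calc t ^ k * Real.exp (-t^3 + A*t^2 + B*t)
          ≤ Real.exp (k*t) * Real.exp (-t^3 + A*t^2 + B*t) :=
            mul_le_mul_of_nonneg_right h1 (Real.exp_pos _).le
        _ = Real.exp ((-t^3 + A*t^2 + (B+k+1)*t) + (-1*t)) := by rw [← Real.exp_add]; ring_nf
        _ ≤ Real.exp (C + (-1*t)) := by
            apply Real.exp_le_exp.2; linarith [hC t ht0]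
        _ = Real.exp C * Real.exp (-1*t) := Real.exp_add _ _
    rw [Real.norm_eq_abs, abs_of_nonneg (by positivity)]
    exact h2

lemma integrable_momentGN (i : ℕ) (g v : ℝ) :
    IntegrableOn (fun t : ℝ => t ^ i * Real.exp (-t ^ 3 - g * t ^ 2 - (v + 1) * t))
      (Set.Ioi 0) := by
  have h : ∀ t : ℝ, -t^3 - g*t^2 - (v+1)*t = -t^3 + (-g)*t^2 + (-(v+1))*t := fun t => by ring
  simpa only [h] using integrable_pow_exp_cubic i (-g) (-(v+1))

noncomputable def Lmap (t : ℝ) : ℝ × ℝ →L[ℝ] ℝ :=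
  (-(t^2)) • ContinuousLinearMap.fst ℝ ℝ ℝ + (-t) • ContinuousLinearMap.snd ℝ ℝ ℝ

lemma Lmap_apply (t : ℝ) (w : ℝ × ℝ) : Lmap t w = -(t^2) * w.1 + (-t) * w.2 := by
  simp [Lmap]

lemma Lmap_norm_le (t : ℝ) (ht : 0 ≤ t) : ‖Lmap t‖ ≤ t^2 + t := by
  refine (norm_add_le _ _).trans ?_
  have e1 : ‖(-(t^2)) • ContinuousLinearMap.fst ℝ ℝ ℝ‖ = t^2 * ‖ContinuousLinearMap.fst ℝ ℝ ℝ‖ := by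
    rw [norm_smul (-(t^2)) (ContinuousLinearMap.fst ℝ ℝ ℝ), Real.norm_eq_abs, abs_neg,
      abs_of_nonneg (by positivity)]
  have e2 : ‖(-t) • ContinuousLinearMap.snd ℝ ℝ ℝ‖ = t * ‖ContinuousLinearMap.snd ℝ ℝ ℝ‖ := by
    rw [norm_smul (-t) (ContinuousLinearMap.snd ℝ ℝ ℝ), Real.norm_eq_abs, abs_neg,
      abs_of_nonneg ht]
  rw [e1, e2]
  have h1 := ContinuousLinearMap.norm_fst_le (𝕜 := ℝ) (E := ℝ) (F := ℝ)
  have h2 := ContinuousLinearMap.norm_snd_le (𝕜 := ℝ) (E := ℝ) (F := ℝ)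
  have n1 := norm_nonneg (ContinuousLinearMap.fst ℝ ℝ ℝ)
  have n2 := norm_nonneg (ContinuousLinearMap.snd ℝ ℝ ℝ)
  nlinarith [sq_nonneg t]

lemma Lmap_continuous : Continuous Lmap := by
  unfold Lmap
  exact ((continuous_pow 2).neg.smul continuous_const).add (continuous_id.neg.smul continuous_const)

lemma hasFDerivAt_momentGN (i : ℕ) (g v : ℝ) :
    HasFDerivAt (fun p : ℝ × ℝ => momentGN i p.1 p.2)
      ((-(momentGN (i+2) g v)) • ContinuousLinearMap.fst ℝ ℝ ℝ +
       (-(momentGN (i+1) g v)) • ContinuousLinearMap.snd ℝ ℝ ℝ) (g, v) := by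
  have hcont : ∀ x : ℝ × ℝ, Continuous fun t : ℝ => t ^ i *
      Real.exp (-t ^ 3 - x.1 * t ^ 2 - (x.2 + 1) * t) := by
    intro x
    exact (continuous_pow i).mul (Real.continuous_exp.comp (by fun_prop))
  have hcontF' : Continuous fun t : ℝ =>
      (t ^ i * Real.exp (-t ^ 3 - g * t ^ 2 - (v + 1) * t)) • Lmap t :=
    (hcont (g, v)).smul Lmap_continuous
  have hptdiff : ∀ (t : ℝ) (p : ℝ × ℝ),
      HasFDerivAt (fun q : ℝ × ℝ => t ^ i *
        Real.exp (-t ^ 3 - q.1 * t ^ 2 - (q.2 + 1) * t))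
        ((t ^ i * Real.exp (-t ^ 3 - p.1 * t ^ 2 - (p.2 + 1) * t)) • Lmap t) p := by
    intro t p
    have ha : HasFDerivAt (fun q : ℝ × ℝ => (-(t^2)) * q.1)
        ((-(t^2)) • ContinuousLinearMap.fst ℝ ℝ ℝ) p := (hasFDerivAt_fst).const_mul _
    have hb : HasFDerivAt (fun q : ℝ × ℝ => (-t) * q.2)
        ((-t) • ContinuousLinearMap.snd ℝ ℝ ℝ) p := (hasFDerivAt_snd).const_mul _
    have hc := (ha.add hb).add_const (-t^3 - t)
    have h1 : HasFDerivAt (fun q : ℝ × ℝ => -t ^ 3 - q.1 * t ^ 2 - (q.2 + 1) * t) (Lmap t) p := by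
      have heq : (fun q : ℝ × ℝ => -t ^ 3 - q.1 * t ^ 2 - (q.2 + 1) * t) =
          fun q : ℝ × ℝ => ((-(t^2)) * q.1 + (-t) * q.2) + (-t^3 - t) := by
        funext q; ring
      rw [heq, Lmap]
      exact hc
    have h2 := (h1.exp).const_mul (t ^ i)
    rw [smul_smul] at h2
    convert h2 using 2
  -- apply dominated convergence for fderiv
  set bound : ℝ → ℝ := fun t =>
    t^(i+2) * Real.exp (-t^3 + (|g|+1)*t^2 + (|v|+2)*t) +
    t^(i+1) * Real.exp (-t^3 + (|g|+1)*t^2 + (|v|+2)*t) with hbound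
  have hbound_int : Integrable bound (volume.restrict (Set.Ioi (0:ℝ))) :=
    (integrable_pow_exp_cubic (i+2) _ _).add (integrable_pow_exp_cubic (i+1) _ _)
  have hnorm_le : ∀ t ∈ Set.Ioi (0:ℝ), ∀ x : ℝ × ℝ, |x.1 - g| ≤ 1 → |x.2 - v| ≤ 1 →
      ‖(t ^ i * Real.exp (-t ^ 3 - x.1 * t ^ 2 - (x.2 + 1) * t)) • Lmap t‖ ≤ bound t := by
    intro t ht x hx1 hx2
    have ht0 : (0:ℝ) < t := ht
    have hexp : Real.exp (-t^3 - x.1*t^2 - (x.2+1)*t) ≤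
        Real.exp (-t^3 + (|g|+1)*t^2 + (|v|+2)*t) := by
      apply Real.exp_le_exp.2
      have h1 := abs_le.1 hx1
      have h2 := abs_le.1 hx2
      have hg := neg_abs_le g
      have hv := neg_abs_le v
      nlinarith [sq_nonneg t, mul_pos ht0 ht0]
    rw [norm_smul (t ^ i * Real.exp (-t ^ 3 - x.1 * t ^ 2 - (x.2 + 1) * t)) (Lmap t)]
    calc ‖t ^ i * Real.exp (-t ^ 3 - x.1 * t ^ 2 - (x.2 + 1) * t)‖ * ‖Lmap t‖
        ≤ (t^i * Real.exp (-t^3 + (|g|+1)*t^2 + (|v|+2)*t)) * (t^2 + t) := by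
          apply mul_le_mul _ (Lmap_norm_le t ht0.le) (norm_nonneg _) (by positivity)
          rw [Real.norm_eq_abs, abs_of_nonneg (by positivity)]
          exact mul_le_mul_of_nonneg_left hexp (by positivity)
      _ = bound t := by rw [hbound]; ring
  have h_bound : ∀ᵐ t ∂(volume.restrict (Set.Ioi (0:ℝ))),
      ∀ x ∈ Metric.ball ((g:ℝ), v) 1,
      ‖(t ^ i * Real.exp (-t ^ 3 - x.1 * t ^ 2 - (x.2 + 1) * t)) • Lmap t‖ ≤ bound t := by
    rw [ae_restrict_iff' measurableSet_Ioi]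
    filter_upwards with t ht
    intro x hx
    have hx' : max (dist x.1 g) (dist x.2 v) < 1 := by
      rw [Metric.mem_ball, Prod.dist_eq] at hx; exact hx
    refine hnorm_le t ht x ?_ ?_
    · rw [← Real.dist_eq]; exact ((le_max_left _ _).trans_lt hx').le
    · rw [← Real.dist_eq]; exact ((le_max_right _ _).trans_lt hx').le
  have key := hasFDerivAt_integral_of_dominated_of_fderiv_le
    (μ := volume.restrict (Set.Ioi (0:ℝ))) (x₀ := ((g:ℝ), v))
    (F := fun (p : ℝ × ℝ) (t : ℝ) => t ^ i * Real.exp (-t ^ 3 - p.1 * t ^ 2 - (p.2 + 1) * t))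
    (F' := fun (p : ℝ × ℝ) (t : ℝ) =>
      (t ^ i * Real.exp (-t ^ 3 - p.1 * t ^ 2 - (p.2 + 1) * t)) • Lmap t)
    (bound := bound) (Metric.ball_mem_nhds _ one_pos)
    (Eventually.of_forall fun x => (hcont x).aestronglyMeasurable)
    (integrable_momentGN i g v) hcontF'.aestronglyMeasurable
    h_bound hbound_int
    (Eventually.of_forall fun t x _ => hptdiff t x)
  have hFi' : Integrable (fun t : ℝ =>
      (t ^ i * Real.exp (-t ^ 3 - g * t ^ 2 - (v + 1) * t)) • Lmap t)
      (volume.restrict (Set.Ioi (0:ℝ))) := by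
    refine hbound_int.mono' hcontF'.aestronglyMeasurable ?_
    rw [ae_restrict_iff' measurableSet_Ioi]
    filter_upwards with t ht
    exact hnorm_le t ht ((g:ℝ), v) (by simp) (by simp)
  have hintF' : (∫ t in Set.Ioi (0:ℝ),
      (t ^ i * Real.exp (-t ^ 3 - g * t ^ 2 - (v + 1) * t)) • Lmap t) =
      (-(momentGN (i+2) g v)) • ContinuousLinearMap.fst ℝ ℝ ℝ +
      (-(momentGN (i+1) g v)) • ContinuousLinearMap.snd ℝ ℝ ℝ := by
    refine ContinuousLinearMap.ext fun w => ?_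
    rw [ContinuousLinearMap.integral_apply hFi']
    have heq : (fun t : ℝ =>
        ((t ^ i * Real.exp (-t ^ 3 - g * t ^ 2 - (v + 1) * t)) • Lmap t) w) =
        fun t : ℝ => (-w.1) * (t^(i+2) * Real.exp (-t^3 - g*t^2 - (v+1)*t)) +
          (-w.2) * (t^(i+1) * Real.exp (-t^3 - g*t^2 - (v+1)*t)) := by
      funext t
      rw [ContinuousLinearMap.smul_apply, Lmap_apply, smul_eq_mul]
      ring
    rw [heq, integral_add ((integrable_momentGN (i+2) g v).const_mul _)
      ((integrable_momentGN (i+1) g v).const_mul _),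
      integral_const_mul, integral_const_mul]
    simp only [ContinuousLinearMap.add_apply, ContinuousLinearMap.smul_apply,
      ContinuousLinearMap.coe_fst', ContinuousLinearMap.coe_snd', smul_eq_mul]
    rw [momentGN, momentGN]
    ring
  rw [hintF'] at key
  exact key

lemma hasDerivAt_momentGN_comp (i : ℕ) (ν : ℝ → ℝ) (g d : ℝ) (hν : HasDerivAt ν d g) :
    HasDerivAt (fun x => momentGN i x (ν x))
      (-(momentGN (i+2) g (ν g)) - d * momentGN (i+1) g (ν g)) g := by
  have hγ : HasDerivAt (fun x : ℝ => (x, ν x)) ((1:ℝ), d) g := (hasDerivAt_id g).prodMk hν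
  have h := (hasFDerivAt_momentGN i g (ν g)).comp_hasDerivAt g hγ
  simp only [ContinuousLinearMap.add_apply, ContinuousLinearMap.smul_apply,
    ContinuousLinearMap.coe_fst', ContinuousLinearMap.coe_snd', smul_eq_mul] at h
  refine HasDerivAt.congr_deriv h ?_
  ring

theorem stmt16 (I : Set ℝ) (hIopen : IsOpen I) (hIconn : I.OrdConnected)
    (ν : ℝ → ℝ)
    (hdiff : ∀ g ∈ I, DifferentiableAt ℝ ν g)
    (hdiff2 : ∀ g ∈ I, DifferentiableAt ℝ (deriv ν) g)
    (hM0 : ∀ g ∈ I, momentGN 0 g (ν g) = 1)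
    (gs : ℝ) (hgs : gs ∈ I) (hM1 : momentGN 1 gs (ν gs) = 1) :
    deriv (deriv ν) gs =
      momentGN 4 gs (ν gs) - 2 * momentGN 3 gs (ν gs) * momentGN 2 gs (ν gs) +
        (momentGN 2 gs (ν gs)) ^ 3 := by
  have hstep1 : ∀ g ∈ I, momentGN 2 g (ν g) + deriv ν g * momentGN 1 g (ν g) = 0 := by
    intro g hg
    have hν : HasDerivAt ν (deriv ν g) g := (hdiff g hg).hasDerivAt
    have hD := hasDerivAt_momentGN_comp 0 ν g _ hν
    have hconst : HasDerivAt (fun x => momentGN 0 x (ν x)) 0 g := by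
      have hev : (fun x => momentGN 0 x (ν x)) =ᶠ[𝓝 g] fun _ => (1:ℝ) := by
        filter_upwards [hIopen.mem_nhds hg] with x hx using hM0 x hx
      exact (hasDerivAt_const g 1).congr_of_eventuallyEq hev
    have huniq := hD.unique hconst
    norm_num at huniq
    linarith [huniq]
  have hν1 : deriv ν gs = -(momentGN 2 gs (ν gs)) := by
    have := hstep1 gs hgs; rw [hM1] at this; linarith
  have hν : HasDerivAt ν (deriv ν gs) gs := (hdiff gs hgs).hasDerivAt
  have hν2 : HasDerivAt (deriv ν) (deriv (deriv ν) gs) gs := (hdiff2 gs hgs).hasDerivAt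
  have hD2 := hasDerivAt_momentGN_comp 2 ν gs _ hν
  have hD1 := hasDerivAt_momentGN_comp 1 ν gs _ hν
  have hφ := hD2.add (hν2.mul hD1)
  have hφ0 : HasDerivAt
      (fun g => momentGN 2 g (ν g) + deriv ν g * momentGN 1 g (ν g)) 0 gs := by
    have hev : (fun g => momentGN 2 g (ν g) + deriv ν g * momentGN 1 g (ν g))
        =ᶠ[𝓝 gs] fun _ => (0:ℝ) := by
      filter_upwards [hIopen.mem_nhds hgs] with x hx using hstep1 x hx
    exact (hasDerivAt_const gs 0).congr_of_eventuallyEq hev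
  have hkey := hφ.unique hφ0
  norm_num at hkey
  rw [hM1, hν1] at hkey
  linear_combination hkey
end

section
/- For s ∈ [0,1] let f_s : [0,∞) → ℝ be smooth in t, and suppose there exist s₀, δ₀ > 0 such that f_s(t), f_s′(t), f_s″(t), f_s‴(t) are jointly continuous and bounded on [0,s₀]×[0,δ₀] (primes denote t-derivatives). Assume there are constants a > 0 and α > 0 such that f_s(0)/s → −a as s ↓ 0, f_s′(0) = O(s) as s ↓ 0, and f₀″(0) = α. Suppose t₀ : (0,s₀] → (0,δ₀] satisfies f_s(t₀(s)) = 0 for every s and t₀(s) → 0 as s ↓ 0. Then t₀(s) ~ √(2as/α) as s ↓ 0, i.e., t₀(s)/√(2as/α) → 1. -/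
open MeasureTheory Filter Set Topology


lemma taylor2_lower (g : ℝ → ℝ) (hg : ContDiffOn ℝ (⊤ : ℕ∞) g (Set.Ici 0))
    (η : ℝ) (c : ℝ)
    (hc : ∀ τ ∈ Set.Icc (0:ℝ) η, c ≤ derivWithin (derivWithin g (Set.Ici 0)) (Set.Ici 0) τ)
    (t : ℝ) (ht : t ∈ Set.Icc (0:ℝ) η) :
    g 0 + derivWithin g (Set.Ici 0) 0 * t + c * t ^ 2 / 2 ≤ g t := by
  set g1 := derivWithin g (Set.Ici 0) with hg1def
  have huniq : UniqueDiffOn ℝ (Set.Ici (0:ℝ)) := uniqueDiffOn_Ici 0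
  have hg1 : ContDiffOn ℝ (⊤ : ℕ∞) g1 (Set.Ici 0) :=
    hg.derivWithin huniq (by exact_mod_cast le_top)
  have hIci : ∀ x : ℝ, 0 < x → Set.Ici (0:ℝ) ∈ 𝓝 x := fun x hx =>
    mem_of_superset (Ioi_mem_nhds hx) Set.Ioi_subset_Ici_self
  have hsub : Set.Icc (0:ℝ) η ⊆ Set.Ici 0 := Set.Icc_subset_Ici_self
  have hone : (1 : ℕ∞) ≤ (⊤ : ℕ∞) := le_top
  -- step 1 : g1 t ≥ g1 0 + c * t on Icc 0 η
  have hmono1 : MonotoneOn (fun τ => g1 τ - g1 0 - c * τ) (Set.Icc 0 η) := by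
    apply monotoneOn_of_deriv_nonneg (convex_Icc 0 η)
    · exact ((hg1.continuousOn.mono hsub).sub continuousOn_const).sub
        (continuousOn_const.mul continuousOn_id)
    · rw [interior_Icc]
      intro x hx
      have hd : DifferentiableAt ℝ g1 x :=
        ((hg1.differentiableOn (by simp)) x (le_of_lt hx.1)).differentiableAt
          (hIci x hx.1)
      apply DifferentiableAt.differentiableWithinAt
      apply (hd.sub_const _).sub
      fun_prop
    · rw [interior_Icc]
      intro x hx
      have hd : DifferentiableAt ℝ g1 x :=
        ((hg1.differentiableOn (by simp)) x (le_of_lt hx.1)).differentiableAt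
          (hIci x hx.1)
      have H : HasDerivAt (fun τ => g1 τ - g1 0 - c * τ) (deriv g1 x - c * 1) x :=
        (hd.hasDerivAt.sub_const _).sub ((hasDerivAt_id x).const_mul c)
      rw [H.deriv]
      have h1 : deriv g1 x = derivWithin g1 (Set.Ici 0) x :=
        (derivWithin_of_mem_nhds (hIci x hx.1)).symm
      have h2 := hc x ⟨le_of_lt hx.1, le_of_lt hx.2⟩
      rw [h1]; linarith
  -- step 2 : main
  have hmono2 : MonotoneOn (fun τ => g τ - (g 0 + g1 0 * τ + c * τ ^ 2 / 2)) (Set.Icc 0 η) := by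
    apply monotoneOn_of_deriv_nonneg (convex_Icc 0 η)
    · apply ((hg.continuousOn.mono hsub).sub _)
      fun_prop
    · rw [interior_Icc]
      intro x hx
      have hd : DifferentiableAt ℝ g x :=
        ((hg.differentiableOn (by simp)) x (le_of_lt hx.1)).differentiableAt
          (hIci x hx.1)
      apply DifferentiableAt.differentiableWithinAt
      apply hd.sub
      fun_prop
    · rw [interior_Icc]
      intro x hx
      have hd : DifferentiableAt ℝ g x :=
        ((hg.differentiableOn (by simp)) x (le_of_lt hx.1)).differentiableAt
          (hIci x hx.1)
      have hpoly : HasDerivAt (fun τ : ℝ => g 0 + g1 0 * τ + c * τ ^ 2 / 2) (g1 0 + c * x) x := by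
        have h0 : HasDerivAt (fun τ : ℝ => g 0 + g1 0 * τ + c * τ ^ 2 / 2)
            (0 + g1 0 * 1 + c * (↑2 * x ^ 1) / 2) x :=
          (((hasDerivAt_const x (g 0)).add ((hasDerivAt_id x).const_mul (g1 0))).add
            (((hasDerivAt_pow 2 x).const_mul c).div_const 2))
        convert h0 using 1
        push_cast; ring
      have H : HasDerivAt (fun τ => g τ - (g 0 + g1 0 * τ + c * τ ^ 2 / 2))
          (deriv g x - (g1 0 + c * x)) x := hd.hasDerivAt.sub hpoly
      rw [H.deriv]
      have h1 : deriv g x = g1 x := by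
        rw [hg1def]; exact (derivWithin_of_mem_nhds (hIci x hx.1)).symm
      rw [h1]
      have h2 := hmono1 (Set.left_mem_Icc.mpr (le_trans ht.1 ht.2)) ⟨le_of_lt hx.1, le_of_lt hx.2⟩
        (le_of_lt hx.1)
      norm_num at h2
      linarith
  have h0 : (0:ℝ) ∈ Set.Icc (0:ℝ) η := Set.left_mem_Icc.mpr (le_trans ht.1 ht.2)
  have h3 := hmono2 h0 ht ht.1
  norm_num at h3
  linarith


lemma taylor2_upper (g : ℝ → ℝ) (hg : ContDiffOn ℝ (⊤ : ℕ∞) g (Set.Ici 0))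
    (η : ℝ) (c : ℝ)
    (hc : ∀ τ ∈ Set.Icc (0:ℝ) η, derivWithin (derivWithin g (Set.Ici 0)) (Set.Ici 0) τ ≤ c)
    (t : ℝ) (ht : t ∈ Set.Icc (0:ℝ) η) :
    g t ≤ g 0 + derivWithin g (Set.Ici 0) 0 * t + c * t ^ 2 / 2 := by
  set g1 := derivWithin g (Set.Ici 0) with hg1def
  have huniq : UniqueDiffOn ℝ (Set.Ici (0:ℝ)) := uniqueDiffOn_Ici 0
  have hg1 : ContDiffOn ℝ (⊤ : ℕ∞) g1 (Set.Ici 0) :=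
    hg.derivWithin huniq (by exact_mod_cast le_top)
  have hIci : ∀ x : ℝ, 0 < x → Set.Ici (0:ℝ) ∈ 𝓝 x := fun x hx =>
    mem_of_superset (Ioi_mem_nhds hx) Set.Ioi_subset_Ici_self
  have hsub : Set.Icc (0:ℝ) η ⊆ Set.Ici 0 := Set.Icc_subset_Ici_self
  have hone : (1 : ℕ∞) ≤ (⊤ : ℕ∞) := le_top
  have hmono1 : AntitoneOn (fun τ => g1 τ - g1 0 - c * τ) (Set.Icc 0 η) := by
    apply antitoneOn_of_deriv_nonpos (convex_Icc 0 η)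
    · exact ((hg1.continuousOn.mono hsub).sub continuousOn_const).sub
        (continuousOn_const.mul continuousOn_id)
    · rw [interior_Icc]
      intro x hx
      have hd : DifferentiableAt ℝ g1 x :=
        ((hg1.differentiableOn (by simp)) x (le_of_lt hx.1)).differentiableAt
          (hIci x hx.1)
      apply DifferentiableAt.differentiableWithinAt
      apply (hd.sub_const _).sub
      fun_prop
    · rw [interior_Icc]
      intro x hx
      have hd : DifferentiableAt ℝ g1 x :=
        ((hg1.differentiableOn (by simp)) x (le_of_lt hx.1)).differentiableAt
          (hIci x hx.1)
      have H : HasDerivAt (fun τ => g1 τ - g1 0 - c * τ) (deriv g1 x - c * 1) x :=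
        (hd.hasDerivAt.sub_const _).sub ((hasDerivAt_id x).const_mul c)
      rw [H.deriv]
      have h1 : deriv g1 x = derivWithin g1 (Set.Ici 0) x :=
        (derivWithin_of_mem_nhds (hIci x hx.1)).symm
      have h2 := hc x ⟨le_of_lt hx.1, le_of_lt hx.2⟩
      rw [h1]; linarith
  have hmono2 : AntitoneOn (fun τ => g τ - (g 0 + g1 0 * τ + c * τ ^ 2 / 2)) (Set.Icc 0 η) := by
    apply antitoneOn_of_deriv_nonpos (convex_Icc 0 η)
    · apply ((hg.continuousOn.mono hsub).sub _)
      fun_prop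
    · rw [interior_Icc]
      intro x hx
      have hd : DifferentiableAt ℝ g x :=
        ((hg.differentiableOn (by simp)) x (le_of_lt hx.1)).differentiableAt
          (hIci x hx.1)
      apply DifferentiableAt.differentiableWithinAt
      apply hd.sub
      fun_prop
    · rw [interior_Icc]
      intro x hx
      have hd : DifferentiableAt ℝ g x :=
        ((hg.differentiableOn (by simp)) x (le_of_lt hx.1)).differentiableAt
          (hIci x hx.1)
      have hpoly : HasDerivAt (fun τ : ℝ => g 0 + g1 0 * τ + c * τ ^ 2 / 2) (g1 0 + c * x) x := by
        have h0 : HasDerivAt (fun τ : ℝ => g 0 + g1 0 * τ + c * τ ^ 2 / 2)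
            (0 + g1 0 * 1 + c * (↑2 * x ^ 1) / 2) x :=
          (((hasDerivAt_const x (g 0)).add ((hasDerivAt_id x).const_mul (g1 0))).add
            (((hasDerivAt_pow 2 x).const_mul c).div_const 2))
        convert h0 using 1
        ring
      have H : HasDerivAt (fun τ => g τ - (g 0 + g1 0 * τ + c * τ ^ 2 / 2))
          (deriv g x - (g1 0 + c * x)) x := hd.hasDerivAt.sub hpoly
      rw [H.deriv]
      have h1 : deriv g x = g1 x := by
        rw [hg1def]; exact (derivWithin_of_mem_nhds (hIci x hx.1)).symm
      rw [h1]
      have h2 := hmono1 (Set.left_mem_Icc.mpr (le_trans ht.1 ht.2)) ⟨le_of_lt hx.1, le_of_lt hx.2⟩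
        (le_of_lt hx.1)
      norm_num at h2
      linarith
  have h0 : (0:ℝ) ∈ Set.Icc (0:ℝ) η := Set.left_mem_Icc.mpr (le_trans ht.1 ht.2)
  have h3 := hmono2 h0 ht ht.1
  norm_num at h3
  linarith

set_option maxHeartbeats 1000000 in
theorem stmt19 (f : ℝ → ℝ → ℝ) (s₀ δ₀ : ℝ) (hs₀ : 0 < s₀) (hδ₀ : 0 < δ₀)
    -- each f_s is smooth on [0, ∞)
    (hsmooth : ∀ s ∈ Set.Icc (0 : ℝ) 1, ContDiffOn ℝ (⊤ : ℕ∞) (f s) (Set.Ici 0))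
    -- joint continuity of f, f', f'', f''' on [0,s₀] × [0,δ₀]
    (hcont : ContinuousOn (fun x : ℝ × ℝ => f x.1 x.2) (Set.Icc 0 s₀ ×ˢ Set.Icc 0 δ₀))
    (hcont' : ContinuousOn
      (fun x : ℝ × ℝ => derivWithin (f x.1) (Set.Ici 0) x.2)
      (Set.Icc 0 s₀ ×ˢ Set.Icc 0 δ₀))
    (hcont'' : ContinuousOn
      (fun x : ℝ × ℝ => derivWithin (derivWithin (f x.1) (Set.Ici 0)) (Set.Ici 0) x.2)
      (Set.Icc 0 s₀ ×ˢ Set.Icc 0 δ₀))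
    (hcont''' : ContinuousOn
      (fun x : ℝ × ℝ =>
        derivWithin (derivWithin (derivWithin (f x.1) (Set.Ici 0)) (Set.Ici 0)) (Set.Ici 0) x.2)
      (Set.Icc 0 s₀ ×ˢ Set.Icc 0 δ₀))
    -- boundedness of f, f', f'', f''' on [0,s₀] × [0,δ₀]
    (hbdd : ∃ B : ℝ, ∀ x ∈ Set.Icc (0 : ℝ) s₀ ×ˢ Set.Icc (0 : ℝ) δ₀,
      |f x.1 x.2| ≤ B ∧
      |derivWithin (f x.1) (Set.Ici 0) x.2| ≤ B ∧
      |derivWithin (derivWithin (f x.1) (Set.Ici 0)) (Set.Ici 0) x.2| ≤ B ∧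
      |derivWithin (derivWithin (derivWithin (f x.1) (Set.Ici 0)) (Set.Ici 0)) (Set.Ici 0)
        x.2| ≤ B)
    (a α : ℝ) (ha : 0 < a) (hα : 0 < α)
    -- f_s(0)/s → -a, f_s'(0) = O(s), f₀''(0) = α
    (hf0 : Tendsto (fun s => f s 0 / s) (𝓝[>] (0 : ℝ)) (𝓝 (-a)))
    (hf'0 : ∃ K : ℝ, ∀ᶠ s in 𝓝[>] (0 : ℝ), |derivWithin (f s) (Set.Ici 0) 0| ≤ K * s)
    (hf''0 : derivWithin (derivWithin (f 0) (Set.Ici 0)) (Set.Ici 0) 0 = α)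
    -- the family of zeros t₀(s)
    (t₀ : ℝ → ℝ)
    (ht₀ : ∀ s : ℝ, 0 < s → s ≤ s₀ → 0 < t₀ s ∧ t₀ s ≤ δ₀ ∧ f s (t₀ s) = 0)
    (hlim : Tendsto t₀ (𝓝[>] (0 : ℝ)) (𝓝 0)) :
    Tendsto (fun s => t₀ s / Real.sqrt (2 * a * s / α)) (𝓝[>] (0 : ℝ)) (𝓝 1) := by
  obtain ⟨K, hK⟩ := hf'0
  set K₁ := |K| + 1 with hK₁def
  have hK₁pos : (0:ℝ) < K₁ := by positivity
  have key : Tendsto (fun s => (t₀ s)^2 * α / (2*a*s)) (𝓝[>] (0:ℝ)) (𝓝 1) := by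
    rw [Metric.tendsto_nhds]
    intro ε' hε'
    obtain ⟨e, he, he1, heε'⟩ : ∃ e : ℝ, 0 < e ∧ e ≤ 1 ∧ e ≤ ε' :=
      ⟨min ε' 1, lt_min hε' one_pos, min_le_right _ _, min_le_left _ _⟩
    obtain ⟨ε, hεpos, hεα, hεe⟩ : ∃ ε : ℝ, 0 < ε ∧ ε ≤ α/2 ∧ ε ≤ e*α/8 :=
      ⟨min (α/2) (e*α/8), lt_min (by positivity) (by positivity),
        min_le_left _ _, min_le_right _ _⟩
    obtain ⟨θ, hθpos, hθeq⟩ : ∃ θ : ℝ, 0 < θ ∧ θ * (1+a) = e*a/8 :=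
      ⟨e*a/(8*(1+a)), by positivity, by field_simp⟩
    -- ε-δ from joint continuity of f'' at (0,0)
    have hmem : ((0:ℝ),(0:ℝ)) ∈ Set.Icc (0:ℝ) s₀ ×ˢ Set.Icc (0:ℝ) δ₀ :=
      ⟨⟨le_refl _, hs₀.le⟩, ⟨le_refl _, hδ₀.le⟩⟩
    have hcw := hcont'' _ hmem
    rw [Metric.continuousWithinAt_iff] at hcw
    obtain ⟨r, hr, hball⟩ := hcw ε hεpos
    set η := min δ₀ (r/2) with hηdef
    have hηpos : 0 < η := lt_min hδ₀ (by linarith)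
    have hηδ : η ≤ δ₀ := min_le_left _ _
    have hF : ∀ s ∈ Set.Icc (0:ℝ) (min s₀ (r/2)), ∀ τ ∈ Set.Icc (0:ℝ) η,
        |derivWithin (derivWithin (f s) (Set.Ici 0)) (Set.Ici 0) τ - α| ≤ ε := by
      intro s hs τ hτ
      have hx : ((s,τ) : ℝ×ℝ) ∈ Set.Icc (0:ℝ) s₀ ×ˢ Set.Icc (0:ℝ) δ₀ :=
        ⟨⟨hs.1, le_trans hs.2 (min_le_left _ _)⟩, ⟨hτ.1, le_trans hτ.2 hηδ⟩⟩
      have hd : dist ((s,τ):ℝ×ℝ) ((0,0):ℝ×ℝ) < r := by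
        rw [Prod.dist_eq]
        have h1 : dist s 0 < r := by
          rw [Real.dist_eq, sub_zero, abs_of_nonneg hs.1]
          have := le_trans hs.2 (min_le_right _ _); linarith
        have h2 : dist τ 0 < r := by
          rw [Real.dist_eq, sub_zero, abs_of_nonneg hτ.1]
          have := le_trans hτ.2 (min_le_right _ _); linarith
        exact max_lt h1 h2
      have := hball hx hd
      simp only [Real.dist_eq] at this
      rw [hf''0] at this
      exact this.le
    -- the eventual statements
    have ev1 : ∀ᶠ s in 𝓝[>] (0:ℝ), s ∈ Set.Ioo 0 (min (min s₀ 1) (r/2)) :=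
      eventually_of_mem (Ioo_mem_nhdsGT_of_mem
        ⟨le_refl 0, lt_min (lt_min hs₀ one_pos) (by linarith)⟩) (fun _ h => h)
    have ev3 : ∀ᶠ s in 𝓝[>] (0:ℝ), |t₀ s| < min η (θ*a/K₁) := by
      have := Metric.tendsto_nhds.mp hlim (min η (θ*a/K₁)) (lt_min hηpos (by positivity))
      simpa [Real.dist_eq] using this
    have ev4 : ∀ᶠ s in 𝓝[>] (0:ℝ), |f s 0 / s - (-a)| < θ := by
      have := Metric.tendsto_nhds.mp hf0 θ hθpos
      simpa [Real.dist_eq] using this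
    filter_upwards [ev1, hK, ev3, ev4] with s hs1 hs2 hs3 hs4
    have hs : 0 < s := hs1.1
    have hss₀ : s ≤ s₀ := le_trans hs1.2.le (le_trans (min_le_left _ _) (min_le_left _ _))
    have hs1' : s ≤ 1 := le_trans hs1.2.le (le_trans (min_le_left _ _) (min_le_right _ _))
    have hsr : s ≤ r/2 := le_trans hs1.2.le (min_le_right _ _)
    obtain ⟨htpos, htδ, hroot⟩ := ht₀ s hs hss₀
    set t := t₀ s with htdef
    have htη : t ≤ η := le_trans (le_trans (le_abs_self _) hs3.le) (min_le_left _ _)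
    have htθ : K₁ * t ≤ θ * a := by
      have h1 : t ≤ θ*a/K₁ := le_trans (le_trans (le_abs_self _) hs3.le) (min_le_right _ _)
      rw [le_div_iff₀ hK₁pos] at h1
      linarith
    set b := derivWithin (f s) (Set.Ici 0) 0 with hbdef
    have hb : |b| ≤ K₁ * s := by
      have : K * s ≤ K₁ * s := by
        apply mul_le_mul_of_nonneg_right _ hs.le
        rw [hK₁def]; exact le_trans (le_abs_self K) (by linarith)
      exact le_trans hs2 this
    have hbt : |b * t| ≤ θ * a * s := by
      rw [abs_mul, abs_of_pos htpos]
      calc |b| * t ≤ (K₁ * s) * t := mul_le_mul_of_nonneg_right hb htpos.le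
        _ = (K₁ * t) * s := by ring
        _ ≤ (θ * a) * s := mul_le_mul_of_nonneg_right htθ hs.le
    -- bounds on f s 0
    have hP : |f s 0 + a * s| ≤ θ * s := by
      have h1 : |f s 0 / s + a| ≤ θ := by
        have := hs4; rw [sub_neg_eq_add] at this; exact this.le
      have h2 : |f s 0 / s + a| * s ≤ θ * s := mul_le_mul_of_nonneg_right h1 hs.le
      have h3 : |f s 0 / s + a| * s = |f s 0 + a * s| := by
        rw [← abs_of_pos hs, ← abs_mul, abs_of_pos hs]
        congr 1
        field_simp
      rw [h3] at h2; exact h2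
    rw [abs_le] at hP hbt
    -- Taylor bounds
    have hsm : ContDiffOn ℝ (⊤ : ℕ∞) (f s) (Set.Ici 0) := hsmooth s ⟨hs.le, hs1'⟩
    have hsmem : s ∈ Set.Icc (0:ℝ) (min s₀ (r/2)) := ⟨hs.le, le_min hss₀ hsr⟩
    have htmem : t ∈ Set.Icc (0:ℝ) η := ⟨htpos.le, htη⟩
    have hclow : ∀ τ ∈ Set.Icc (0:ℝ) η,
        α - ε ≤ derivWithin (derivWithin (f s) (Set.Ici 0)) (Set.Ici 0) τ := by
      intro τ hτ
      have := hF s hsmem τ hτ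
      rw [abs_le] at this; linarith [this.1]
    have hcup : ∀ τ ∈ Set.Icc (0:ℝ) η,
        derivWithin (derivWithin (f s) (Set.Ici 0)) (Set.Ici 0) τ ≤ α + ε := by
      intro τ hτ
      have := hF s hsmem τ hτ
      rw [abs_le] at this; linarith [this.2]
    have low := taylor2_lower (f s) hsm η (α - ε) hclow t htmem
    have up := taylor2_upper (f s) hsm η (α + ε) hcup t htmem
    rw [hroot] at low up
    rw [← hbdef] at low up
    -- combined polynomial bounds
    have hθs : (θ * (1+a)) * s = (e*a/8) * s := by rw [hθeq]
    have A' : (α - ε) * t^2 ≤ 2*a*s*(1+e/8) := by linarith [low, hP.1, hbt.1, hθs]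
    have B' : 2*a*s*(1-e/8) ≤ (α + ε) * t^2 := by linarith [up, hP.2, hbt.2, hθs]
    have ht2 : t^2 ≤ 4*a*s*(1+e/8)/α := by
      rw [le_div_iff₀ hα]
      nlinarith [sq_nonneg t, mul_le_mul_of_nonneg_left hεα (sq_nonneg t)]
    have htε : t^2 * ε ≤ a*s*e*(1+e/8)/2 := by
      have h1 : t^2 * ε ≤ (4*a*s*(1+e/8)/α) * (e*α/8) := by
        apply mul_le_mul ht2 hεe hεpos.le
        positivity
      have h2 : (4*a*s*(1+e/8)/α) * (e*α/8) = a*s*e*(1+e/8)/2 := by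
        field_simp; ring
      linarith [h1, h2.le]
    have hase : 0 ≤ a*s*e := mul_nonneg (mul_nonneg ha.le hs.le) he.le
    have hee : a*s*e*e ≤ a*s*e*1 := mul_le_mul_of_nonneg_left he1 hase
    have H1 : t^2 * α ≤ 2*a*s*(1+e/2) := by nlinarith [A', htε, hee, mul_nonneg (sq_nonneg t) hεpos.le]
    have H2 : 2*a*s*(1-e/2) ≤ t^2 * α := by nlinarith [B', htε, hee, mul_nonneg (sq_nonneg t) hεpos.le]
    -- conclude
    have h2as : 0 < 2*a*s := by positivity
    rw [Real.dist_eq]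
    have habs : |t^2 * α/(2*a*s) - 1| ≤ e/2 := by
      rw [abs_le]
      constructor
      · rw [le_sub_iff_add_le, le_div_iff₀ h2as]
        nlinarith [H2]
      · rw [sub_le_iff_le_add, div_le_iff₀ h2as]
        nlinarith [H1]
    calc |t^2 * α/(2*a*s) - 1| ≤ e/2 := habs
      _ < e := by linarith
      _ ≤ ε' := heε'
  -- transfer to the square root
  have hsq : Tendsto (fun s => Real.sqrt ((t₀ s)^2 * α / (2*a*s))) (𝓝[>] (0:ℝ)) (𝓝 1) := by
    have := (Real.continuous_sqrt.tendsto 1).comp key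
    simpa [Function.comp_def] using this
  apply hsq.congr'
  have ev : ∀ᶠ s in 𝓝[>] (0:ℝ), s ∈ Set.Ioo 0 s₀ :=
    eventually_of_mem (Ioo_mem_nhdsGT_of_mem ⟨le_refl 0, hs₀⟩) (fun _ h => h)
  filter_upwards [ev] with s hs
  obtain ⟨htpos, _, _⟩ := ht₀ s hs.1 hs.2.le
  have h1 : (t₀ s)^2 * α / (2*a*s) = (t₀ s)^2 / (2*a*s/α) := by
    field_simp
  rw [h1, Real.sqrt_div (sq_nonneg _), Real.sqrt_sq htpos.le]
end
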